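/- arXiv:1601.03987 — 3 statements merged into one kernel-verified Lean document; each statement's English description precedes it below -/
import Mathlib

section
/- Let S = ((t_1,a_1),…,(t_w,a_w)) be a NE-pattern. Then J_{t_1}(a_1)⋯J_{t_w}(a_w) = ⋂_{(u,b)} J_u(b)^{e_{ub}(S)}, the intersection taken over all pairs (u,b) of positive integers with u ≤ m and u + b ≤ n + 1 (where the 0-th power of an ideal is the unit ideal R). -/
open MvPolynomial

/-- The `t`-minor of the generic `m × n` matrix of indeterminates with rows `1,…,t`
(0-indexed `0,…,t-1`) and columns given by `c`. -/
noncomputable def minorP (K : Type*) [Field K] (m n : ℕ) {t : ℕ} (c : Fin t → Fin n) :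
    MvPolynomial (Fin m × Fin n) K :=
  Matrix.det (Matrix.of fun i j : Fin t =>
    if h : (i : ℕ) < m then (X (⟨(i : ℕ), h⟩, c j) : MvPolynomial (Fin m × Fin n) K) else 0)

/-- Admissible column selections for a `t`-minor (or diagonal) of `X_t(a)`:
strictly increasing columns, all with (1-indexed) column number `≥ a`. -/
def NEcols (n t a : ℕ) (c : Fin t → Fin n) : Prop :=
  StrictMono c ∧ ∀ j, a ≤ (c j : ℕ) + 1

/-- The northeast ideal `I_t(a)`, generated by the `t`-minors of `X_t(a)`. -/
noncomputable def NEIdeal (K : Type*) [Field K] (m n t a : ℕ) :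
    Ideal (MvPolynomial (Fin m × Fin n) K) :=
  Ideal.span {f | ∃ c : Fin t → Fin n, NEcols n t a c ∧ f = minorP K m n c}

/-- The diagonal monomial `x_{1 b₁} ⋯ x_{t b_t}` with columns `c`. -/
noncomputable def diagP (K : Type*) [Field K] (m n : ℕ) {t : ℕ} (c : Fin t → Fin n) :
    MvPolynomial (Fin m × Fin n) K :=
  ∏ j : Fin t,
    if h : (j : ℕ) < m then (X (⟨(j : ℕ), h⟩, c j) : MvPolynomial (Fin m × Fin n) K) else 0

/-- The monomial ideal `J_t(a)` generated by the diagonals of type `(t,a)`. -/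
noncomputable def JIdeal (K : Type*) [Field K] (m n t a : ℕ) :
    Ideal (MvPolynomial (Fin m × Fin n) K) :=
  Ideal.span {f | ∃ c : Fin t → Fin n, NEcols n t a c ∧ f = diagP K m n c}

/-- A valid pair `(t,a)`: `1 ≤ t`, `1 ≤ a`, `t ≤ m`, `t + a ≤ n + 1`. -/
def ValidPair (m n : ℕ) (p : ℕ × ℕ) : Prop :=
  1 ≤ p.1 ∧ 1 ≤ p.2 ∧ p.1 ≤ m ∧ p.1 + p.2 ≤ n + 1

/-- A NE-pattern: a list of valid pairs, ordered with weakly increasing `a` and,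
for equal `a`, weakly decreasing `t`. -/
def IsNEPattern (m n : ℕ) (S : List (ℕ × ℕ)) : Prop :=
  (∀ p ∈ S, ValidPair m n p) ∧
    S.Pairwise fun p q => p.2 ≤ q.2 ∧ (p.2 = q.2 → q.1 ≤ p.1)

/-- The ideal `I_S`, product of the `I_{t_i}(a_i)` over the pattern `S`. -/
noncomputable def ISIdeal (K : Type*) [Field K] (m n : ℕ) (S : List (ℕ × ℕ)) :
    Ideal (MvPolynomial (Fin m × Fin n) K) :=
  (S.map fun p => NEIdeal K m n p.1 p.2).prod

/-- `e_{ub}(S) = #{i : b ≤ a_i and u ≤ t_i}`. -/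
def eCount (S : List (ℕ × ℕ)) (u b : ℕ) : ℕ :=
  S.countP fun p => decide (b ≤ p.2 ∧ u ≤ p.1)

namespace NEwork

variable {m n : ℕ}

def wt {u : ℕ} (c : Fin u → Fin n) (z : Fin m × Fin n) : ℕ :=
  if h : (z.1 : ℕ) < u then (if c ⟨z.1, h⟩ = z.2 then 1 else 0) else 0

def PackN (ν : Fin m × Fin n → ℕ) (u b e : ℕ) : Prop :=
  ∃ f : Fin e → Fin u → Fin n, (∀ l, NEcols n u b (f l)) ∧
    ∀ z, (∑ l, wt (f l) z) ≤ ν z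

def Packs (ν : Fin m × Fin n → ℕ) : List (ℕ × ℕ) → Prop
  | [] => True
  | p :: L => ∃ c : Fin p.1 → Fin n, NEcols n p.1 p.2 c ∧ (∀ z, wt c z ≤ ν z) ∧
      Packs (fun z => ν z - wt c z) L

def ChainPos (ν : Fin m × Fin n → ℕ) {t : ℕ} (φ : Fin t → Fin n) : Prop :=
  StrictMono φ ∧ ∀ (i : Fin t) (r : Fin m), (r : ℕ) = (i : ℕ) → 1 ≤ ν (r, φ i)

end NEwork
namespace NEwork
variable {m n : ℕ}

lemma wt_eq_zero_of_row_ge {u : ℕ} (c : Fin u → Fin n) (z : Fin m × Fin n)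
    (h : u ≤ (z.1 : ℕ)) : wt c z = 0 := by
  unfold wt; rw [dif_neg (by omega)]

lemma wt_self_of {u : ℕ} (c : Fin u → Fin n) (i : Fin u) (r : Fin m)
    (hr : (r : ℕ) = (i : ℕ)) (j : Fin n) (hj : j = c i) : wt c (r, j) = 1 := by
  have h : (r : ℕ) < u := by rw [hr]; exact i.2
  unfold wt
  rw [dif_pos h]
  have : (⟨(r : ℕ), h⟩ : Fin u) = i := Fin.ext hr
  rw [this, hj, if_pos rfl]

lemma Packs_mono {ν ν' : Fin m × Fin n → ℕ} (h : ∀ z, ν z ≤ ν' z) :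
    ∀ L : List (ℕ × ℕ), Packs ν L → Packs ν' L
  | [], _ => trivial
  | p :: L, ⟨c, hc, hle, hrest⟩ =>
    ⟨c, hc, fun z => (hle z).trans (h z), Packs_mono (fun z => by have := h z; omega) L hrest⟩

lemma PackN_mono {ν ν' : Fin m × Fin n → ℕ} (h : ∀ z, ν z ≤ ν' z) {u b e : ℕ}
    (hp : PackN ν u b e) : PackN ν' u b e := by
  obtain ⟨f, hf, hcap⟩ := hp
  exact ⟨f, hf, fun z => (hcap z).trans (h z)⟩

lemma PackN_zero (ν : Fin m × Fin n → ℕ) (u b : ℕ) : PackN ν u b 0 :=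
  ⟨Fin.elim0, fun l => l.elim0, fun z => by simp⟩

lemma PackN_shrink {ν : Fin m × Fin n → ℕ} {u b e e' : ℕ} (h : e' ≤ e)
    (hp : PackN ν u b e) : PackN ν u b e' := by
  obtain ⟨f, hf, hcap⟩ := hp
  refine ⟨fun l => f (Fin.castLE h l), fun l => hf _, fun z => le_trans ?_ (hcap z)⟩
  have : (∑ l : Fin e', wt (f (Fin.castLE h l)) z)
      = ∑ l ∈ Finset.univ.map (Fin.castLEEmb h), wt (f l) z := by
    rw [Finset.sum_map]; rfl
  rw [this]
  exact Finset.sum_le_sum_of_subset (Finset.subset_univ _)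

lemma PackN_succ_of {ν : Fin m × Fin n → ℕ} {u b e : ℕ} (c : Fin u → Fin n)
    (hc : NEcols n u b c) (hwt : ∀ z, wt c z ≤ ν z)
    (hp : PackN (fun z => ν z - wt c z) u b e) : PackN ν u b (e + 1) := by
  obtain ⟨f, hf, hcap⟩ := hp
  refine ⟨Fin.cases c f, fun l => ?_, fun z => ?_⟩
  · induction l using Fin.cases with
    | zero => exact hc
    | succ l => exact hf l
  · rw [Fin.sum_univ_succ]
    have h1 := hcap z; have h2 := hwt z
    simp only [Fin.cases_zero, Fin.cases_succ] at *
    omega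

lemma Packs_concat {ν : Fin m × Fin n → ℕ} :
    ∀ (L : List (ℕ × ℕ)) (p : ℕ × ℕ) (c : Fin p.1 → Fin n), NEcols n p.1 p.2 c →
      (∀ z, wt c z ≤ ν z) → Packs (fun z => ν z - wt c z) L → Packs ν (L ++ [p]) := by
  intro L
  induction L generalizing ν with
  | nil =>
    intro p c hc hle h
    exact ⟨c, hc, hle, trivial⟩
  | cons q L' IH =>
    intro p c hc hle h
    obtain ⟨cq, hcq, hleq, hrest⟩ := h
    have hleq' : ∀ z, wt cq z ≤ ν z - wt c z := hleq
    have hrest' : Packs (fun z => ν z - wt c z - wt cq z) L' := hrest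
    refine ⟨cq, hcq, fun z => le_trans (hleq' z) (Nat.sub_le _ _), ?_⟩
    have h2 : ∀ z, wt c z ≤ ν z - wt cq z := fun z => by
      have ha := hleq' z; have hb := hle z; omega
    have h3 : Packs (fun z => (ν z - wt cq z) - wt c z) L' :=
      Packs_mono (fun z => by have ha := hleq' z; have hb := hle z; omega) L' hrest'
    exact IH p c hc h2 h3

lemma strictMono_of_lt_succ {u : ℕ} {α : Type*} [Preorder α] {f : Fin u → α}
    (h : ∀ i j : Fin u, (j : ℕ) = (i : ℕ) + 1 → f i < f j) : StrictMono f := by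
  have key : ∀ (d : ℕ) (i j : Fin u), (j : ℕ) = (i : ℕ) + d + 1 → f i < f j := by
    intro d
    induction d with
    | zero => intro i j hj; exact h i j (by omega)
    | succ d ih =>
      intro i j hj
      have hm : (i : ℕ) + d + 1 < u := by omega
      exact lt_trans (ih i ⟨(i : ℕ) + d + 1, hm⟩ rfl) (h ⟨(i : ℕ) + d + 1, hm⟩ j (by simp; omega))
  intro i j hij
  exact key ((j : ℕ) - (i : ℕ) - 1) i j (by omega)

lemma cells_pos {ν : Fin m × Fin n → ℕ} {u e : ℕ} {F : Fin e → Fin u → Fin n}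
    (hcap : ∀ z, (∑ l, wt (F l) z) ≤ ν z) (l : Fin e) (i : Fin u) (r : Fin m)
    (hr : (r : ℕ) = (i : ℕ)) : 1 ≤ ν (r, F l i) := by
  have h1 := hcap (r, F l i)
  have h2 : wt (F l) (r, F l i) = 1 := wt_self_of (F l) i r hr _ rfl
  have h3 : wt (F l) (r, F l i) ≤ ∑ l', wt (F l') (r, F l i) :=
    Finset.single_le_sum (f := fun l' => wt (F l') (r, F l i))
      (fun _ _ => Nat.zero_le _) (Finset.mem_univ l)
  omega

lemma initseg {N : ℕ} {α : Type*} [LinearOrder α] {g : Fin N → α} (hg : Monotone g)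
    (v : α) (l : Fin N) :
    g l ≤ v ↔ (l : ℕ) < (Finset.univ.filter (fun k => g k ≤ v)).card := by
  constructor
  · intro h
    have hsub : Finset.Iic l ⊆ Finset.univ.filter (fun k => g k ≤ v) := by
      intro k hk
      simp only [Finset.mem_Iic] at hk
      simp only [Finset.mem_filter, Finset.mem_univ, true_and]
      exact le_trans (hg hk) h
    have := Finset.card_le_card hsub
    rw [Fin.card_Iic] at this
    omega
  · intro h
    by_contra hcon
    have hsub : Finset.univ.filter (fun k => g k ≤ v) ⊆ Finset.Iio l := by
      intro k hk
      simp only [Finset.mem_filter, Finset.mem_univ, true_and] at hk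
      simp only [Finset.mem_Iio]
      by_contra hge
      exact hcon (le_trans (hg (not_lt.1 hge)) hk)
    have := Finset.card_le_card hsub
    rw [Fin.card_Iio] at this
    omega

end NEwork
namespace NEwork
variable {m n : ℕ}

lemma exists_sorted {ν : Fin m × Fin n → ℕ} {u b e : ℕ}
    (hp : PackN ν u b e) :
    ∃ f : Fin e → Fin u → Fin n, (∀ l, NEcols n u b (f l)) ∧
      (∀ z, (∑ l, wt (f l) z) ≤ ν z) ∧ ∀ i : Fin u, Monotone (fun l => f l i) := by
  obtain ⟨g, hg, hcap⟩ := hp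
  set σ : Fin u → Equiv.Perm (Fin e) := fun i => Tuple.sort (fun l => g l i) with hσ
  refine ⟨fun l i => g (σ i l) i, fun l => ⟨?_, fun j => (hg (σ j l)).2 j⟩, fun z => ?_, ?_⟩
  · apply strictMono_of_lt_succ
    intro i1 i2 h12
    by_contra hcon
    push_neg at hcon
    set v := g (σ i2 l) i2 with hv
    have hA : Finset.image (σ i2) (Finset.Iic l) ⊆
        Finset.univ.filter (fun k => g k i1 < v) := by
      intro k hk
      simp only [Finset.mem_image, Finset.mem_Iic] at hk
      obtain ⟨l', hl', rfl⟩ := hk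
      have h2 : g (σ i2 l') i2 ≤ v := Tuple.monotone_sort (fun l => g l i2) hl'
      have h3 : g (σ i2 l') i1 < g (σ i2 l') i2 := (hg _).1 (by exact Fin.lt_def.2 (by omega))
      simp only [Finset.mem_filter, Finset.mem_univ, true_and]
      exact lt_of_lt_of_le h3 h2
    have hB : Finset.univ.filter (fun k => g k i1 < v) ⊆
        Finset.image (σ i1) (Finset.Iio l) := by
      intro k hk
      simp only [Finset.mem_filter, Finset.mem_univ, true_and] at hk
      simp only [Finset.mem_image, Finset.mem_Iio]
      refine ⟨(σ i1)⁻¹ k, ?_, by simp⟩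
      by_contra hge
      push_neg at hge
      have : g (σ i1 l) i1 ≤ g (σ i1 ((σ i1)⁻¹ k)) i1 :=
        Tuple.monotone_sort (fun l => g l i1) hge
      rw [← Equiv.Perm.mul_apply, mul_inv_cancel, Equiv.Perm.one_apply] at this
      have := hcon.trans this
      exact absurd hk (not_lt.2 this)
    have c1 : (Finset.image (σ i2) (Finset.Iic l)).card = l.1 + 1 := by
      rw [Finset.card_image_of_injective _ (σ i2).injective, Fin.card_Iic]
    have c2 : (Finset.image (σ i1) (Finset.Iio l)).card = l.1 := by
      rw [Finset.card_image_of_injective _ (σ i1).injective, Fin.card_Iio]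
    have := (Finset.card_le_card (hA.trans hB))
    omega
  · refine le_trans (le_of_eq ?_) (hcap z)
    unfold wt
    by_cases h : (z.1 : ℕ) < u
    · simp only [dif_pos h]
      exact Equiv.sum_comp (σ ⟨z.1, h⟩) (fun k => if g k ⟨z.1.1, h⟩ = z.2 then 1 else 0)
    · simp [dif_neg h]
  · intro i l l' hll'
    exact Tuple.monotone_sort (fun l => g l i) hll'

lemma exists_greedy {ν : Fin m × Fin n → ℕ} {t : ℕ}
    (φ0 : Fin t → Fin n) (h0 : ChainPos ν φ0) :
    ∃ D : Fin t → Fin n, ChainPos ν D ∧ ∀ φ, ChainPos ν φ → φ ≤ D := by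
  classical
  set s : Finset (Fin t → Fin n) := Finset.univ.filter (fun φ => ChainPos ν φ) with hs
  have hne : s.Nonempty := ⟨φ0, by simp [hs, h0]⟩
  refine ⟨s.sup' hne id, ?_, ?_⟩
  · apply Finset.sup'_induction
    · intro a ha b hb
      constructor
      · intro i j hij
        have h1 : a i < a j := ha.1 hij
        have h2 : b i < b j := hb.1 hij
        exact sup_lt_iff.2 ⟨lt_of_lt_of_le h1 le_sup_left, lt_of_lt_of_le h2 le_sup_right⟩
      · intro i r hr
        show 1 ≤ ν (r, a i ⊔ b i)
        rcases max_cases (a i) (b i) with ⟨hmax, _⟩ | ⟨hmax, _⟩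
        · rw [hmax]; exact ha.2 i r hr
        · rw [hmax]; exact hb.2 i r hr
    · intro φ hφ
      exact (Finset.mem_filter.1 hφ).2
  · intro φ hφ
    exact Finset.le_sup' (f := id) (by simp [hs, hφ] : φ ∈ s)

lemma greedy_gap {ν : Fin m × Fin n → ℕ} {t : ℕ} {D : Fin t → Fin n}
    (hD : ChainPos ν D) (hmax : ∀ φ, ChainPos ν φ → φ ≤ D)
    (i : Fin t) (j : Fin n) (hgt : D i < j)
    (hnext : ∀ hs : (i : ℕ) + 1 < t, j < D ⟨(i : ℕ) + 1, hs⟩)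
    (r : Fin m) (hr : (r : ℕ) = (i : ℕ)) : ν (r, j) = 0 := by
  by_contra hpos
  have hpos' : 1 ≤ ν (r, j) := Nat.pos_of_ne_zero hpos
  classical
  have hφ : ChainPos ν (Function.update D i j) := by
    constructor
    · intro k k' hkk'
      have hne' : k ≠ k' := ne_of_lt hkk'
      rcases eq_or_ne k i with rfl | hki
      · rw [Function.update_self]
        rw [Function.update_of_ne (Ne.symm hne')]
        have h1 : (k : ℕ) + 1 < t := by
          have := k'.2; have : (k : ℕ) < (k' : ℕ) := hkk'; omega
        have h2 : j < D ⟨(k : ℕ) + 1, h1⟩ := hnext h1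
        have h3 : D ⟨(k : ℕ) + 1, h1⟩ ≤ D k' := by
          rcases eq_or_lt_of_le (show (⟨(k : ℕ) + 1, h1⟩ : Fin t) ≤ k' from by
            have : (k : ℕ) < (k' : ℕ) := hkk'
            exact Fin.le_def.2 (by simp; omega)) with he | hl
          · rw [he]
          · exact le_of_lt (hD.1 hl)
        exact lt_of_lt_of_le h2 h3
      · rcases eq_or_ne k' i with rfl | hki'
        · rw [Function.update_self, Function.update_of_ne hki]
          exact lt_trans (hD.1 hkk') hgt
        · rw [Function.update_of_ne hki, Function.update_of_ne hki']
          exact hD.1 hkk'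
    · intro k r' hr'
      rcases eq_or_ne k i with rfl | hki
      · rw [Function.update_self]
        have : r' = r := Fin.ext (by omega)
        rw [this]; exact hpos'
      · rw [Function.update_of_ne hki]; exact hD.2 k r' hr'
  have hle := hmax _ hφ i
  rw [Function.update_self] at hle
  exact absurd hle (not_le.2 hgt)

end NEwork

namespace NEwork
variable {m n : ℕ}

section remove
variable {u t e b : ℕ}

/-- The removal lemma: removing the greedy diagonal `D` of length `t ≥ u` from a sorted
packing of `e+1` chains of type `(u,b)` leaves a packing of `e` chains. -/
lemma remove {ν : Fin m × Fin n → ℕ} (htm : t ≤ m) (hut : u ≤ t)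
    (D : Fin t → Fin n) (hDmono : StrictMono D)
    (hDpos : ∀ (i : Fin t) (r : Fin m), (r : ℕ) = (i : ℕ) → 1 ≤ ν (r, D i))
    (hgap : ∀ (i : Fin t) (j : Fin n), D i < j →
      (∀ hs : (i : ℕ) + 1 < t, j < D ⟨(i : ℕ) + 1, hs⟩) →
      ∀ r : Fin m, (r : ℕ) = (i : ℕ) → ν (r, j) = 0)
    (F : Fin (e + 1) → Fin u → Fin n) (hch : ∀ l, NEcols n u b (F l))
    (hsort : ∀ i : Fin u, Monotone (fun l => F l i))
    (hcap : ∀ z, (∑ l, wt (F l) z) ≤ ν z) :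
    PackN (fun z => ν z - wt D z) u b e := by
  classical
  -- the embedding of chain rows into D's rows
  set iT : Fin u → Fin t := fun i => ⟨i.1, by omega⟩ with hiT
  set L : Fin u → ℕ := fun i => (Finset.univ.filter (fun l => F l i ≤ D (iT i))).card with hL
  have hLle : ∀ i, L i ≤ e + 1 := by
    intro i
    calc L i ≤ Finset.univ.card := Finset.card_filter_le _ _
    _ = e + 1 := by simp
  set q : Fin u → Fin (e + 1) := fun i => ⟨max (L i) 1 - 1, by have := hLle i; omega⟩ with hq
  set B : Fin e → Fin u → Fin n := fun l i => F ((q i).succAbove l) i with hB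
  -- initial segment property
  have hinit : ∀ (i : Fin u) (l : Fin (e + 1)), F l i ≤ D (iT i) ↔ (l : ℕ) < L i :=
    fun i l => initseg (hsort i) (D (iT i)) l
  -- monotonicity of L on consecutive rows
  have hLmono : ∀ i i' : Fin u, (i' : ℕ) = (i : ℕ) + 1 → L i' ≤ L i := by
    intro i i' hii'
    have hcompl : ∀ i₀ : Fin u, (e + 1) - L i₀ =
        (Finset.univ.filter (fun l => ¬ F l i₀ ≤ D (iT i₀))).card := by
      intro i₀
      have := Finset.card_filter_add_card_filter_not
        (s := (Finset.univ : Finset (Fin (e+1)))) (p := fun l => F l i₀ ≤ D (iT i₀))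
      simp only [Finset.card_univ, Fintype.card_fin] at this
      have h2 := hLle i₀
      simp only [hL] at *
      omega
    have hsub : (Finset.univ.filter (fun l => ¬ F l i ≤ D (iT i))) ⊆
        (Finset.univ.filter (fun l => ¬ F l i' ≤ D (iT i'))) := by
      intro l hl
      simp only [Finset.mem_filter, Finset.mem_univ, true_and, not_le] at hl ⊢
      -- F l i > D (iT i); gap forces F l i ≥ D (iT i')
      have hs : ((iT i : ℕ)) + 1 < t := by
        have h2 := i'.2
        simp only [hiT]
        omega
      have hnn : ¬ (F l i < D ⟨(iT i : ℕ) + 1, hs⟩) := by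
        intro hlt
        have hzero := hgap (iT i) (F l i) hl (fun _ => hlt) ⟨(i : ℕ), by omega⟩ rfl
        have hpos := cells_pos hcap l i ⟨(i : ℕ), by omega⟩ rfl
        omega
      push_neg at hnn
      have he : (⟨(iT i : ℕ) + 1, hs⟩ : Fin t) = iT i' := by
        apply Fin.ext; simp [hiT, hii']
      rw [he] at hnn
      calc D (iT i') ≤ F l i := hnn
      _ < F l i' := (hch l).1 (show i < i' from Fin.lt_def.2 (by omega))
    have := Finset.card_le_card hsub
    rw [← hcompl i, ← hcompl i'] at this
    have h2 := hLle i; have h3 := hLle i'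
    omega
  have hqmono : ∀ i i' : Fin u, (i' : ℕ) = (i : ℕ) + 1 → (q i' : ℕ) ≤ (q i : ℕ) := by
    intro i i' hii'
    have := hLmono i i' hii'
    simp only [hq]
    omega
  -- pivot comparison for succAbove
  have hpiv : ∀ (p p' : Fin (e + 1)) (l : Fin e), (p' : ℕ) ≤ (p : ℕ) →
      ((p.succAbove l : Fin (e + 1)) : ℕ) ≤ ((p'.succAbove l : Fin (e + 1)) : ℕ) := by
    intro p p' l hpp'
    rcases lt_or_ge ((l.castSucc : Fin (e+1)) : ℕ) (p' : ℕ) with h1 | h1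
    · rw [Fin.succAbove_of_castSucc_lt p' l (Fin.lt_def.2 h1),
        Fin.succAbove_of_castSucc_lt p l (Fin.lt_def.2 (by omega))]
    · rw [Fin.succAbove_of_le_castSucc p' l (Fin.le_def.2 h1)]
      rcases lt_or_ge ((l.castSucc : Fin (e+1)) : ℕ) (p : ℕ) with h2 | h2
      · rw [Fin.succAbove_of_castSucc_lt p l (Fin.lt_def.2 h2)]
        simp only [Fin.coe_castSucc, Fin.val_succ]
        omega
      · rw [Fin.succAbove_of_le_castSucc p l (Fin.le_def.2 h2)]
  refine ⟨B, fun l => ⟨?_, fun j => (hch _).2 j⟩, ?_⟩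
  · -- strict monotonicity of the new chains
    apply strictMono_of_lt_succ
    intro i i' hii'
    have hk : ((q i).succAbove l : ℕ) ≤ ((q i').succAbove l : ℕ) :=
      hpiv _ _ l (hqmono i i' hii')
    calc B l i = F ((q i).succAbove l) i := rfl
    _ ≤ F ((q i').succAbove l) i := hsort i (Fin.le_def.2 hk)
    _ < F ((q i').succAbove l) i' := (hch _).1 (Fin.lt_def.2 (by omega))
  · -- capacity
    intro z
    obtain ⟨r, j⟩ := z
    by_cases hru : (r : ℕ) < u
    · set i : Fin u := ⟨(r : ℕ), hru⟩ with hi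
      have hstep : ∀ l : Fin e, wt (B l) (r, j) =
          if F ((q i).succAbove l) i = j then 1 else 0 := by
        intro l
        unfold wt
        rw [dif_pos hru]
      have hstepF : ∀ k : Fin (e + 1), wt (F k) (r, j) = if F k i = j then 1 else 0 := by
        intro k
        unfold wt
        rw [dif_pos hru]
      have hsum : (∑ k : Fin (e + 1), if F k i = j then (1:ℕ) else 0) =
          (if F (q i) i = j then 1 else 0) +
            ∑ l : Fin e, if F ((q i).succAbove l) i = j then (1:ℕ) else 0 :=
        Fin.sum_univ_succAbove (fun k => if F k i = j then (1:ℕ) else 0) (q i)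
      have hT : (∑ k : Fin (e + 1), if F k i = j then (1:ℕ) else 0) ≤ ν (r, j) := by
        calc (∑ k : Fin (e + 1), if F k i = j then (1:ℕ) else 0)
            = ∑ k, wt (F k) (r, j) := by
              apply Finset.sum_congr rfl; intro k _; rw [hstepF k]
        _ ≤ ν (r, j) := hcap _
      have hrt : (r : ℕ) < t := by omega
      have hwtD : wt D (r, j) = if D (iT i) = j then 1 else 0 := by
        unfold wt
        rw [dif_pos hrt]
      by_cases hDj : D (iT i) = j
      · -- the cell is on the diagonal
        have hν1 : 1 ≤ ν (r, j) := by
          have := hDpos (iT i) r (by simp [hiT, hi])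
          rwa [hDj] at this
        by_cases hqj : F (q i) i = j
        · -- removed chain covers the diagonal cell
          simp only [hstep, hwtD, if_pos hDj]
          rw [if_pos hqj] at hsum
          omega
        · -- no chain sits on the diagonal cell at all
          have hT0 : (∑ k : Fin (e + 1), if F k i = j then (1:ℕ) else 0) = 0 := by
            by_contra hne
            obtain ⟨k0, hk0⟩ : ∃ k0 : Fin (e + 1), F k0 i = j := by
              by_contra hall
              push_neg at hall
              exact hne (Finset.sum_eq_zero (fun k _ => if_neg (hall k)))
            have hk0le : F k0 i ≤ D (iT i) := le_of_eq (hk0.trans hDj.symm)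
            have hk0lt : (k0 : ℕ) < L i := (hinit i k0).1 hk0le
            have hLpos : 1 ≤ L i := by omega
            have hqval : (q i : ℕ) = L i - 1 := by simp only [hq]; omega
            have h1 : F k0 i ≤ F (q i) i := hsort i (Fin.le_def.2 (by omega))
            have h2 : F (q i) i ≤ D (iT i) := (hinit i (q i)).2 (by omega)
            have h3 : F (q i) i = D (iT i) := by
              apply le_antisymm h2
              rw [hk0] at h1
              rw [← hDj] at h1
              exact h1
            exact hqj (h3.trans hDj)
          simp only [hstep, hwtD, if_pos hDj]
          rw [hsum] at hT0
          omega
      · -- off-diagonal cell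
        simp only [hstep, hwtD, if_neg hDj]
        rw [hsum] at hT
        omega
    · -- row beyond the chains
      have : ∀ l : Fin e, wt (B l) (r, j) = 0 := by
        intro l; unfold wt; rw [dif_neg hru]
      simp only [this, Finset.sum_const_zero]
      exact Nat.zero_le _
end remove

section merge
variable {u t e b : ℕ}

/-- The merge lemma: given a sorted packing `A` of `e` chains of type `(u,b)` in `ν` with
`u > t`, and a sorted packing `G` of `e` chains of type `(t,b)` in `ν - D`, where `D` is the
pointwise-maximal positive `t`-chain of `ν`, there is a packing of `e` `(u,b)`-chains
in `ν - D`. -/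
lemma merge {ν : Fin m × Fin n → ℕ} (htm : t ≤ m) (hum : u ≤ m) (htu : t < u)
    (D : Fin t → Fin n)
    (hmax : ∀ φ : Fin t → Fin n, StrictMono φ →
      (∀ (i : Fin t) (r : Fin m), (r : ℕ) = (i : ℕ) → 1 ≤ ν (r, φ i)) → φ ≤ D)
    (A : Fin e → Fin u → Fin n) (hchA : ∀ l, NEcols n u b (A l))
    (hsortA : ∀ i : Fin u, Monotone (fun l => A l i))
    (hcapA : ∀ z, (∑ l, wt (A l) z) ≤ ν z)
    (G : Fin e → Fin t → Fin n) (hchG : ∀ l, NEcols n t b (G l))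
    (hsortG : ∀ i : Fin t, Monotone (fun l => G l i))
    (hcapG : ∀ z, (∑ l, wt (G l) z) ≤ ν z - wt D z) :
    PackN (fun z => ν z - wt D z) u b e := by
  classical
  set B : Fin e → Fin u → Fin n :=
    fun l i => if h : (i : ℕ) < t then min (A l i) (G l ⟨(i : ℕ), h⟩) else A l i with hB
  -- dominance of D over all chains of G
  have hdom : ∀ (l : Fin e) (i : Fin t), G l i ≤ D i := by
    intro l i
    refine hmax (G l) (hchG l).1 (fun i' r hr => ?_) i
    have h1 := cells_pos hcapG l i' r hr
    omega
  refine ⟨B, fun l => ⟨?_, fun j => ?_⟩, ?_⟩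
  · -- strict monotonicity
    apply strictMono_of_lt_succ
    intro i i' hii'
    by_cases h' : (i' : ℕ) < t
    · have h : (i : ℕ) < t := by omega
      have hAlt : A l i < A l i' := (hchA l).1 (Fin.lt_def.2 (by omega))
      have hGlt : G l ⟨(i : ℕ), h⟩ < G l ⟨(i' : ℕ), h'⟩ := (hchG l).1 (Fin.lt_def.2 (by simp; omega))
      simp only [hB, dif_pos h, dif_pos h']
      exact lt_min (lt_of_le_of_lt (min_le_left _ _) hAlt)
        (lt_of_le_of_lt (min_le_right _ _) hGlt)
    · have hAlt : A l i < A l i' := (hchA l).1 (Fin.lt_def.2 (by omega))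
      simp only [hB, dif_neg h']
      by_cases h : (i : ℕ) < t
      · simp only [dif_pos h]
        exact lt_of_le_of_lt (min_le_left _ _) hAlt
      · simp only [dif_neg h]
        exact hAlt
  · -- column lower bounds
    simp only [hB]
    by_cases h : (j : ℕ) < t
    · simp only [dif_pos h]
      rcases min_cases (A l j) (G l ⟨(j : ℕ), h⟩) with ⟨hmin, _⟩ | ⟨hmin, _⟩ <;> rw [hmin]
      · exact (hchA l).2 j
      · exact (hchG l).2 _
    · simp only [dif_neg h]
      exact (hchA l).2 j
  · -- capacity
    intro z
    obtain ⟨r, j⟩ := z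
    by_cases hru : (r : ℕ) < u
    · set i : Fin u := ⟨(r : ℕ), hru⟩ with hi
      have hsumA : (∑ l, wt (A l) (r, j)) = ∑ l, if A l i = j then 1 else 0 := by
        apply Finset.sum_congr rfl; intro l _
        unfold wt; rw [dif_pos hru]
      by_cases hrt : (r : ℕ) < t
      · set iT : Fin t := ⟨(r : ℕ), hrt⟩ with hiT
        have hstep : ∀ l, wt (B l) (r, j) =
            if min (A l i) (G l iT) = j then 1 else 0 := by
          intro l
          unfold wt; rw [dif_pos hru]
          simp only [hB, dif_pos hrt]
          rfl
        have hsumG : (∑ l, wt (G l) (r, j)) = ∑ l, if G l iT = j then 1 else 0 := by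
          apply Finset.sum_congr rfl; intro l _
          unfold wt; rw [dif_pos hrt]
        have hwtD : wt D (r, j) = if D iT = j then 1 else 0 := by
          unfold wt; rw [dif_pos hrt]
        simp only [hstep]
        by_cases hDj : D iT = j
        · -- diagonal cell: compare with G
          have hle : ∀ l, (if min (A l i) (G l iT) = j then (1:ℕ) else 0) ≤
              (if G l iT = j then 1 else 0) := by
            intro l
            by_cases hm : min (A l i) (G l iT) = j
            · have h1 : G l iT ≤ j := hDj ▸ hdom l iT
              have h2 : j ≤ G l iT := hm ▸ min_le_right _ _
              rw [if_pos hm, if_pos (le_antisymm h1 h2)]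
            · rw [if_neg hm]; exact Nat.zero_le _
          calc (∑ l, if min (A l i) (G l iT) = j then (1:ℕ) else 0)
              ≤ ∑ l, if G l iT = j then (1:ℕ) else 0 := Finset.sum_le_sum (fun l _ => hle l)
          _ = ∑ l, wt (G l) (r, j) := hsumG.symm
          _ ≤ ν (r, j) - wt D (r, j) := hcapG _
        · by_cases hex : ∃ l', min (A l' i) (G l' iT) = j ∧ G l' iT ≠ j
          · -- compare with A; the cell is free of D
            obtain ⟨l', hl'm, hl'G⟩ := hex
            have hl'A : A l' i = j := by
              rcases min_cases (A l' i) (G l' iT) with ⟨hmin, _⟩ | ⟨hmin, _⟩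
              · rwa [hmin] at hl'm
              · exact absurd (hmin ▸ hl'm) hl'G
            have hl'Ggt : j < G l' iT :=
              lt_of_le_of_ne (hl'm ▸ min_le_right _ _) (Ne.symm hl'G)
            have hle : ∀ l, (if min (A l i) (G l iT) = j then (1:ℕ) else 0) ≤
                (if A l i = j then 1 else 0) := by
              intro l
              by_cases hm : min (A l i) (G l iT) = j
              · rw [if_pos hm]
                rcases le_total l l' with hll | hll
                · have h1 : A l i ≤ A l' i := hsortA i hll
                  have h2 : j ≤ A l i := hm ▸ min_le_left _ _
                  rw [if_pos (le_antisymm (hl'A ▸ h1) h2)]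
                · have h1 : G l' iT ≤ G l iT := hsortG iT hll
                  have h2 : j < G l iT := lt_of_lt_of_le hl'Ggt h1
                  have h3 : A l i = j := by
                    rcases min_cases (A l i) (G l iT) with ⟨hmin, _⟩ | ⟨hmin, _⟩
                    · rwa [hmin] at hm
                    · exact absurd (hmin ▸ hm) (ne_of_gt h2)
                  rw [if_pos h3]
              · rw [if_neg hm]; exact Nat.zero_le _
            have hcalc : (∑ l, if min (A l i) (G l iT) = j then (1:ℕ) else 0) ≤ ν (r, j) := by
              calc (∑ l, if min (A l i) (G l iT) = j then (1:ℕ) else 0)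
                  ≤ ∑ l, if A l i = j then (1:ℕ) else 0 := Finset.sum_le_sum (fun l _ => hle l)
              _ = ∑ l, wt (A l) (r, j) := hsumA.symm
              _ ≤ ν (r, j) := hcapA _
            rw [hwtD, if_neg hDj]
            omega
          · push_neg at hex
            have hle : ∀ l, (if min (A l i) (G l iT) = j then (1:ℕ) else 0) ≤
                (if G l iT = j then 1 else 0) := by
              intro l
              by_cases hm : min (A l i) (G l iT) = j
              · rw [if_pos hm, if_pos (hex l hm)]
              · rw [if_neg hm]; exact Nat.zero_le _
            calc (∑ l, if min (A l i) (G l iT) = j then (1:ℕ) else 0)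
                ≤ ∑ l, if G l iT = j then (1:ℕ) else 0 := Finset.sum_le_sum (fun l _ => hle l)
            _ = ∑ l, wt (G l) (r, j) := hsumG.symm
            _ ≤ ν (r, j) - wt D (r, j) := hcapG _
      · -- rows between t and u: B agrees with A and D is absent
        have hstep : ∀ l, wt (B l) (r, j) = if A l i = j then 1 else 0 := by
          intro l
          unfold wt; rw [dif_pos hru]
          simp only [hB, dif_neg hrt]
          rfl
        have hwtD : wt D (r, j) = 0 := by
          unfold wt; rw [dif_neg hrt]
        show (∑ l, wt (B l) (r, j)) ≤ ν (r, j) - wt D (r, j)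
        rw [hwtD]
        simp only [hstep, Nat.sub_zero]
        calc (∑ l, if A l i = j then (1:ℕ) else 0) = ∑ l, wt (A l) (r, j) := hsumA.symm
        _ ≤ ν (r, j) := hcapA _
    · have : ∀ l : Fin e, wt (B l) (r, j) = 0 := by
        intro l; unfold wt; rw [dif_neg hru]
      simp only [this, Finset.sum_const_zero]
      exact Nat.zero_le _
end merge
end NEwork
namespace NEwork
variable {m n : ℕ}

lemma eCount_append_single (L : List (ℕ × ℕ)) (p : ℕ × ℕ) (u b : ℕ) :
    eCount (L ++ [p]) u b = eCount L u b + (if b ≤ p.2 ∧ u ≤ p.1 then 1 else 0) := by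
  simp [eCount, List.countP_append, List.countP_cons]

theorem mainPack : ∀ S : List (ℕ × ℕ), (∀ p ∈ S, ValidPair m n p) →
    (S.Pairwise fun p q => p.2 ≤ q.2) → ∀ ν : Fin m × Fin n → ℕ,
    (∀ u b, 1 ≤ u → 1 ≤ b → u ≤ m → u + b ≤ n + 1 → PackN ν u b (eCount S u b)) →
    Packs ν S := by
  intro S
  induction S using List.reverseRecOn with
  | nil => intro _ _ ν _; trivial
  | append_singleton L p IH =>
    intro hval hord ν H
    obtain ⟨hp1, hp2, hpm, hpn⟩ := hval p (by simp)
    have h1 : 1 ≤ eCount (L ++ [p]) p.1 p.2 := by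
      rw [eCount_append_single, if_pos ⟨le_refl _, le_refl _⟩]; omega
    have hPp : PackN ν p.1 p.2 1 := PackN_shrink h1 (H p.1 p.2 hp1 hp2 hpm hpn)
    obtain ⟨f0, hf0, hcap0⟩ := hPp
    have hc0 : ChainPos ν (f0 0) := ⟨(hf0 0).1, fun i r hr => cells_pos hcap0 0 i r hr⟩
    obtain ⟨D, hD, hmaxD⟩ := exists_greedy (f0 0) hc0
    have hDne : NEcols n p.1 p.2 D := by
      refine ⟨hD.1, fun j => ?_⟩
      have h2 := (hf0 0).2 j
      have h3 : (f0 0 j : ℕ) ≤ (D j : ℕ) := hmaxD _ hc0 j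
      omega
    have hwtD : ∀ z, wt D z ≤ ν z := by
      intro z
      unfold wt
      split
      · rename_i h
        split
        · rename_i heq
          have h4 := hD.2 ⟨(z.1 : ℕ), h⟩ z.1 rfl
          rw [heq] at h4
          simpa using h4
        · exact Nat.zero_le _
      · exact Nat.zero_le _
    have H' : ∀ u b, 1 ≤ u → 1 ≤ b → u ≤ m → u + b ≤ n + 1 →
        PackN (fun z => ν z - wt D z) u b (eCount L u b) := by
      intro u b h1u h1b hum hubn
      by_cases hba : b ≤ p.2
      · by_cases hut : u ≤ p.1
        · -- the removal case
          have he : eCount (L ++ [p]) u b = eCount L u b + 1 := by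
            rw [eCount_append_single, if_pos ⟨hba, hut⟩]
          have hp' : PackN ν u b (eCount L u b + 1) := by
            rw [← he]; exact H u b h1u h1b hum hubn
          obtain ⟨F, hch, hcap, hsort⟩ := exists_sorted hp'
          exact remove hpm hut D hD.1 hD.2 (greedy_gap hD hmaxD) F hch hsort hcap
        · -- the merge case
          push_neg at hut
          have he : eCount (L ++ [p]) u b = eCount L u b := by
            rw [eCount_append_single, if_neg (fun hh => absurd hh.2 (by omega))]
            omega
          have hpA : PackN ν u b (eCount L u b) := by
            rw [← he]; exact H u b h1u h1b hum hubn
          obtain ⟨A, hchA, hcapA, hsortA⟩ := exists_sorted hpA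
          have htb : p.1 + b ≤ n + 1 := by omega
          have he2 : eCount L u b + 1 ≤ eCount (L ++ [p]) p.1 b := by
            rw [eCount_append_single, if_pos ⟨hba, le_refl _⟩]
            have hmono : eCount L u b ≤ eCount L p.1 b := by
              apply List.countP_mono_left
              intro q hq hdec
              simp only [decide_eq_true_eq] at hdec ⊢
              exact ⟨hdec.1, by omega⟩
            omega
          have hpF : PackN ν p.1 b (eCount L u b + 1) :=
            PackN_shrink he2 (H p.1 b hp1 h1b hpm htb)
          obtain ⟨F1, hchF1, hcapF1, hsortF1⟩ := exists_sorted hpF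
          have hG' : PackN (fun z => ν z - wt D z) p.1 b (eCount L u b) :=
            remove hpm (le_refl p.1) D hD.1 hD.2 (greedy_gap hD hmaxD) F1 hchF1 hsortF1 hcapF1
          obtain ⟨G, hchG, hcapG, hsortG⟩ := exists_sorted hG'
          exact merge hpm hum hut D (fun φ hsm hcells => hmaxD φ ⟨hsm, hcells⟩)
            A hchA hsortA hcapA G hchG hsortG hcapG
      · -- b exceeds all the a's
        have hz : eCount L u b = 0 := by
          apply List.countP_eq_zero.2
          intro q hq
          have hq2 : q.2 ≤ p.2 := (List.pairwise_append.1 hord).2.2 q hq p (by simp)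
          simp only [decide_eq_true_eq]
          intro hh
          omega
        rw [hz]; exact PackN_zero _ _ _
    have hvalL : ∀ q ∈ L, ValidPair m n q := fun q hq => hval q (by simp [hq])
    have hordL : L.Pairwise fun p q => p.2 ≤ q.2 := (List.pairwise_append.1 hord).1
    exact Packs_concat L p D hDne hwtD (IH hvalL hordL _ H')

lemma packs_to_packN : ∀ (S : List (ℕ × ℕ)) (ν : Fin m × Fin n → ℕ),
    Packs ν S → ∀ u b : ℕ, PackN ν u b (eCount S u b) := by
  intro S
  induction S with
  | nil =>
    intro ν _ u b
    show PackN ν u b 0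
    exact PackN_zero _ _ _
  | cons p L IH =>
    intro ν h u b
    obtain ⟨c, hc, hwt, hrest⟩ := h
    have hIH := IH _ hrest u b
    have hcount : eCount (p :: L) u b =
        eCount L u b + (if b ≤ p.2 ∧ u ≤ p.1 then 1 else 0) := by
      simp [eCount, List.countP_cons]
    by_cases hcnt : b ≤ p.2 ∧ u ≤ p.1
    · rw [hcount, if_pos hcnt]
      set c' : Fin u → Fin n := fun i => c (Fin.castLE hcnt.2 i) with hc'def
      have hc' : NEcols n u b c' := by
        constructor
        · intro i j hij
          exact hc.1 (Fin.lt_def.2 (by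
            rw [Fin.coe_castLE, Fin.coe_castLE]
            exact hij))
        · intro j
          exact le_trans hcnt.1 (hc.2 _)
      have hwt' : ∀ z : Fin m × Fin n, wt c' z ≤ wt c z := by
        intro z
        unfold wt
        by_cases h : (z.1 : ℕ) < u
        · have h2 : (z.1 : ℕ) < p.1 := lt_of_lt_of_le h hcnt.2
          rw [dif_pos h, dif_pos h2]
          have he : c' ⟨(z.1 : ℕ), h⟩ = c ⟨(z.1 : ℕ), h2⟩ := rfl
          rw [he]
        · rw [dif_neg h]; exact Nat.zero_le _
      exact PackN_succ_of c' hc' (fun z => le_trans (hwt' z) (hwt z))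
        (PackN_mono (fun z => by have := hwt' z; omega) hIH)
    · rw [hcount, if_neg hcnt]
      exact PackN_mono (fun z => Nat.sub_le _ _) hIH

end NEwork

namespace NEwork
variable {m n : ℕ}

lemma PackN_peel {ν : Fin m × Fin n → ℕ} {u b e : ℕ}
    (hp : PackN ν u b (e + 1)) :
    ∃ c : Fin u → Fin n, NEcols n u b c ∧ (∀ z, wt c z ≤ ν z) ∧
      PackN (fun z => ν z - wt c z) u b e := by
  obtain ⟨f, hf, hcap⟩ := hp
  refine ⟨f 0, hf 0, fun z => ?_, fun l => f l.succ, fun l => hf _, fun z => ?_⟩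
  · have := hcap z
    rw [Fin.sum_univ_succ] at this
    omega
  · have := hcap z
    rw [Fin.sum_univ_succ] at this
    show (∑ l : Fin e, wt (f l.succ) z) ≤ ν z - wt (f 0) z
    omega

end NEwork

namespace NEwork

open Pointwise

variable (K : Type*) [Field K] {m n : ℕ}

/-- exponent vector of a diagonal -/
noncomputable def dExp {t : ℕ} (c : Fin t → Fin n) : (Fin m × Fin n) →₀ ℕ :=
  ∑ j : Fin t, if h : (j : ℕ) < m then
    Finsupp.single ((⟨(j : ℕ), h⟩ : Fin m), c j) 1 else 0

lemma dExp_apply {t : ℕ} (htm : t ≤ m) (c : Fin t → Fin n) (z : Fin m × Fin n) :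
    dExp c z = wt c z := by
  classical
  obtain ⟨r, y⟩ := z
  unfold dExp
  rw [Finsupp.finset_sum_apply]
  have hterm : ∀ j : Fin t,
      ((if h : (j : ℕ) < m then
        Finsupp.single ((⟨(j : ℕ), h⟩ : Fin m), c j) 1 else 0) : (Fin m × Fin n) →₀ ℕ) (r, y)
      = if ((j : ℕ) = (r : ℕ) ∧ c j = y) then 1 else 0 := by
    intro j
    have h' : (j : ℕ) < m := lt_of_lt_of_le j.2 htm
    rw [dif_pos h', Finsupp.single_apply]
    by_cases hc : ((⟨(j : ℕ), h'⟩ : Fin m), c j) = (r, y)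
    · rw [if_pos hc, if_pos ⟨Fin.ext_iff.1 (congrArg Prod.fst hc), congrArg Prod.snd hc⟩]
    · have hne : ¬ ((j : ℕ) = (r : ℕ) ∧ c j = y) :=
        fun hh => hc (Prod.ext_iff.2 ⟨Fin.ext hh.1, hh.2⟩)
      rw [if_neg hc, if_neg hne]
  rw [Finset.sum_congr rfl (fun j _ => hterm j)]
  show _ = wt c (r, y)
  unfold wt
  by_cases hru : (r : ℕ) < t
  · rw [dif_pos hru]
    rw [Finset.sum_eq_single (⟨(r : ℕ), hru⟩ : Fin t)]
    · by_cases hcy : c ⟨(r : ℕ), hru⟩ = y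
      · rw [if_pos ⟨rfl, hcy⟩, if_pos hcy]
      · have hne2 : ¬ (((⟨(r : ℕ), hru⟩ : Fin t) : ℕ) = (r : ℕ) ∧ c ⟨(r : ℕ), hru⟩ = y) :=
          fun hh => hcy hh.2
        rw [if_neg hne2, if_neg hcy]
    · intro j _ hne
      have hne2 : ¬ ((j : ℕ) = (r : ℕ) ∧ c j = y) := fun hh => hne (Fin.ext hh.1)
      exact if_neg hne2
    · intro habs
      exact absurd (Finset.mem_univ _) habs
  · rw [dif_neg hru]
    apply Finset.sum_eq_zero
    intro j _
    have hne2 : ¬ ((j : ℕ) = (r : ℕ) ∧ c j = y) := fun hh => hru (hh.1 ▸ j.2)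
    exact if_neg hne2

lemma prod_X_eq_monomial {ι : Type*} (s : Finset ι) (g : ι → Fin m × Fin n) :
    (∏ i ∈ s, (X (g i) : MvPolynomial (Fin m × Fin n) K))
      = monomial (∑ i ∈ s, Finsupp.single (g i) 1) 1 := by
  classical
  induction s using Finset.cons_induction with
  | empty => simp
  | cons a s ha ih =>
    rw [Finset.prod_cons, Finset.sum_cons, ih,
      show (X (g a) : MvPolynomial (Fin m × Fin n) K)
        = monomial (Finsupp.single (g a) 1) 1 from rfl,
      monomial_mul, one_mul]

lemma diagP_eq_monomial {t : ℕ} (htm : t ≤ m) (c : Fin t → Fin n) :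
    diagP K m n c = monomial (dExp c) 1 := by
  unfold diagP dExp
  rw [Finset.prod_congr rfl (fun j _ => dif_pos (lt_of_lt_of_le j.2 htm)),
      Finset.sum_congr rfl (fun j _ => dif_pos (lt_of_lt_of_le j.2 htm))]
  exact prod_X_eq_monomial K Finset.univ
    (fun j : Fin t => ((⟨(j : ℕ), lt_of_lt_of_le j.2 htm⟩ : Fin m), c j))

lemma JIdeal_eq_span {t a : ℕ} (htm : t ≤ m) :
    JIdeal K m n t a = Ideal.span ((fun d => monomial d (1 : K)) ''
      {d | ∃ c : Fin t → Fin n, NEcols n t a c ∧ d = dExp c}) := by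
  unfold JIdeal
  congr 1
  ext f
  constructor
  · rintro ⟨c, hc, rfl⟩
    exact ⟨dExp c, ⟨c, hc, rfl⟩, (diagP_eq_monomial K htm c).symm⟩
  · rintro ⟨d, ⟨c, hc, rfl⟩, rfl⟩
    exact ⟨c, hc, (diagP_eq_monomial K htm c).symm⟩

/-- sums of exponent vectors of diagonals of the types in `S` -/
def DSum : List (ℕ × ℕ) → ((Fin m × Fin n) →₀ ℕ) → Prop
  | [], d => d = 0
  | p :: L, d => ∃ c : Fin p.1 → Fin n, NEcols n p.1 p.2 c ∧
      ∃ d', DSum L d' ∧ d = dExp c + d'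

lemma prod_eq_span : ∀ S : List (ℕ × ℕ), (∀ p ∈ S, p.1 ≤ m) →
    (S.map fun p => JIdeal K m n p.1 p.2).prod =
      Ideal.span ((fun d => monomial d (1 : K)) '' {d | DSum S d}) := by
  intro S
  induction S with
  | nil =>
    intro _
    show (1 : Ideal (MvPolynomial (Fin m × Fin n) K)) = _
    have h0 : {d : (Fin m × Fin n) →₀ ℕ | DSum [] d} = {0} := by
      ext d
      exact Iff.rfl
    rw [h0, Set.image_singleton,
      show (monomial (0 : (Fin m × Fin n) →₀ ℕ) (1 : K)) = 1 by simp,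
      Ideal.span_singleton_one, Ideal.one_eq_top]
  | cons p L IH =>
    intro hval
    rw [List.map_cons, List.prod_cons, IH (fun q hq => hval q (by simp [hq])),
      JIdeal_eq_span K (hval p (by simp)), Ideal.span_mul_span']
    congr 1
    ext g
    constructor
    · intro hg
      rw [Set.mem_mul] at hg
      obtain ⟨x, hx, y, hy, rfl⟩ := hg
      obtain ⟨dd, hdd, rfl⟩ := hx
      obtain ⟨c, hc, hddeq⟩ := hdd
      subst hddeq
      obtain ⟨d2, hd2, rfl⟩ := hy
      exact ⟨dExp c + d2, ⟨c, hc, d2, hd2, rfl⟩, by rw [monomial_mul, one_mul]⟩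
    · rintro ⟨d, ⟨c, hc, d', hd', rfl⟩, rfl⟩
      rw [Set.mem_mul]
      exact ⟨monomial (dExp c) 1, ⟨dExp c, ⟨c, hc, rfl⟩, rfl⟩,
        monomial d' 1, ⟨d', hd', rfl⟩, by rw [monomial_mul, one_mul]⟩

lemma dsum_iff_packs : ∀ S : List (ℕ × ℕ), (∀ p ∈ S, p.1 ≤ m) →
    ∀ ν : Fin m × Fin n → ℕ,
    (∃ d : (Fin m × Fin n) →₀ ℕ, DSum S d ∧ ∀ z, d z ≤ ν z) ↔ Packs ν S := by
  intro S
  induction S with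
  | nil =>
    intro _ ν
    constructor
    · intro _; trivial
    · intro _; exact ⟨0, rfl, fun z => by simp⟩
  | cons p L IH =>
    intro hval ν
    have hpm : p.1 ≤ m := hval p (by simp)
    have hvalL : ∀ q ∈ L, q.1 ≤ m := fun q hq => hval q (by simp [hq])
    constructor
    · rintro ⟨d, ⟨c, hc, d', hd', rfl⟩, hle⟩
      have hle' : ∀ z, dExp (m := m) c z + d' z ≤ ν z := fun z => by
        have h1 := hle z
        rwa [Finsupp.add_apply] at h1
      refine ⟨c, hc, fun z => ?_, ?_⟩
      · have h1 := hle' z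
        have hd := dExp_apply hpm c z
        omega
      · apply (IH hvalL (fun z => ν z - wt c z)).1
        refine ⟨d', hd', fun z => ?_⟩
        have h1 := hle' z
        have hd := dExp_apply hpm c z
        omega
    · rintro ⟨c, hc, hwt, hrest⟩
      obtain ⟨d', hd', hled⟩ := (IH hvalL (fun z => ν z - wt c z)).2 hrest
      refine ⟨dExp c + d', ⟨c, hc, d', hd', rfl⟩, fun z => ?_⟩
      rw [Finsupp.add_apply]
      have h1 := hled z
      have h2 := hwt z
      have hd := dExp_apply hpm c z
      omega

lemma mem_prod_iff (S : List (ℕ × ℕ)) (hval : ∀ p ∈ S, p.1 ≤ m)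
    (f : MvPolynomial (Fin m × Fin n) K) :
    f ∈ (S.map fun p => JIdeal K m n p.1 p.2).prod ↔
      ∀ ξ ∈ f.support, Packs (fun z => ξ z) S := by
  rw [prod_eq_span K S hval, mem_ideal_span_monomial_image]
  refine forall₂_congr (fun ξ _ => ?_)
  rw [← dsum_iff_packs S hval (fun z => ξ z)]
  constructor
  · rintro ⟨d, hd, hle⟩
    exact ⟨d, hd, fun z => Finsupp.le_def.1 hle z⟩
  · rintro ⟨d, hd, hle⟩
    exact ⟨d, hd, Finsupp.le_def.2 hle⟩

lemma pow_eq (u b e : ℕ) : JIdeal K m n u b ^ e =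
    ((List.replicate e (u, b)).map fun p => JIdeal K m n p.1 p.2).prod := by
  rw [List.map_replicate, List.prod_replicate]

lemma packs_replicate_iff (u b e : ℕ) : ∀ ν : Fin m × Fin n → ℕ,
    Packs ν (List.replicate e (u, b)) ↔ PackN ν u b e := by
  induction e with
  | zero =>
    intro ν
    constructor
    · intro _; exact PackN_zero _ _ _
    · intro _; trivial
  | succ e IH =>
    intro ν
    rw [List.replicate_succ]
    constructor
    · rintro ⟨c, hc, hwt, hrest⟩
      exact PackN_succ_of c hc hwt ((IH _).1 hrest)
    · intro hp
      obtain ⟨c, hc, hwt, hrest⟩ := PackN_peel hp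
      exact ⟨c, hc, hwt, (IH _).2 hrest⟩

end NEwork

/-- For a NE-pattern `S`, the product of the monomial ideals
`J_{t_1}(a_1)⋯J_{t_w}(a_w)` equals the intersection `⋂_{(u,b)} J_u(b)^{e_{ub}(S)}`
over all pairs `(u,b)` of positive integers with `u ≤ m` and `u + b ≤ n + 1`. -/
theorem JS_eq_iInf_pow (K : Type*) [Field K] (m n : ℕ) (hm : 1 ≤ m) (hmn : m ≤ n)
    (S : List (ℕ × ℕ)) (hS : IsNEPattern m n S) :
    (S.map fun p => JIdeal K m n p.1 p.2).prod =
      ⨅ (u : ℕ) (b : ℕ) (_ : 1 ≤ u) (_ : 1 ≤ b) (_ : u ≤ m) (_ : u + b ≤ n + 1),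
        JIdeal K m n u b ^ eCount S u b := by
  have hval : ∀ p ∈ S, p.1 ≤ m := fun p hp => (hS.1 p hp).2.2.1
  ext f
  rw [NEwork.mem_prod_iff K S hval f]
  simp only [Ideal.mem_iInf]
  constructor
  · intro h u b h1u h1b hum hubn
    rw [NEwork.pow_eq, NEwork.mem_prod_iff K _
      (fun p hp => by rw [List.eq_of_mem_replicate hp]; exact hum)]
    intro ξ hξ
    rw [NEwork.packs_replicate_iff]
    exact NEwork.packs_to_packN S _ (h ξ hξ) u b
  · intro h ξ hξ
    apply NEwork.mainPack S hS.1 (hS.2.imp (fun hpq => hpq.1))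
    intro u b h1u h1b hum hubn
    have h2 := h u b h1u h1b hum hubn
    rw [NEwork.pow_eq, NEwork.mem_prod_iff K _
      (fun p hp => by rw [List.eq_of_mem_replicate hp]; exact hum)] at h2
    exact (NEwork.packs_replicate_iff u b (eCount S u b) _).1 (h2 ξ hξ)
end

section
/- Let k ∈ ℕ and let t, a, u, b be positive integers with b ≤ a, u > t, u ≤ m, t + a ≤ n + 1 and u + b ≤ n + 1. Let M be a monomial lying in J_u(b)^k ∩ J_t(b)^{k+1} ∩ J_t(a), and let F be the lexicographically smallest diagonal of type (t,a) dividing M. Then M/F ∈ J_u(b)^k. -/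
open MvPolynomial Pointwise Finset

/-- `c` gives the lexicographically smallest diagonal of type `(t,a)` dividing the
monomial `M`: the diagonal is of type `(t,a)`, divides `M`, and its column sequence is
lexicographically greatest among all diagonals of type `(t,a)` dividing `M`. -/
def IsSmallestDiagDividing (K : Type*) [Field K] (m n : ℕ) (t a : ℕ)
    (M : MvPolynomial (Fin m × Fin n) K) (c : Fin t → Fin n) : Prop :=
  NEcols n t a c ∧ diagP K m n c ∣ M ∧
    ∀ c' : Fin t → Fin n, NEcols n t a c' → diagP K m n c' ∣ M →
      c' = c ∨ ∃ j : Fin t, (∀ i < j, c' i = c i) ∧ c' j < c j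

noncomputable def chiD (m n : ℕ) {r : ℕ} (hrm : r ≤ m) (c : Fin r → Fin n) :
    (Fin m × Fin n) →₀ ℕ :=
  ∑ j : Fin r, Finsupp.single (Fin.castLE hrm j, c j) 1

lemma chiD_apply (m n : ℕ) {r : ℕ} (hrm : r ≤ m) (c : Fin r → Fin n) (p : Fin m × Fin n) :
    chiD m n hrm c p = if h : (p.1 : ℕ) < r then (if c ⟨p.1, h⟩ = p.2 then 1 else 0) else 0 := by
  classical
  rw [chiD, Finsupp.finset_sum_apply]
  simp only [Finsupp.single_apply]
  split
  · next h =>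
    rw [Finset.sum_eq_single (⟨(p.1 : ℕ), h⟩ : Fin r)]
    · congr 1
      simp only [eq_iff_iff]
      constructor
      · rintro h'
        rw [Prod.ext_iff] at h'
        exact h'.2
      · intro h'
        rw [Prod.ext_iff]
        exact ⟨by apply Fin.ext; rfl, h'⟩
    · intro j _ hj
      rw [if_neg]
      intro h'
      rw [Prod.ext_iff] at h'
      apply hj
      apply Fin.ext
      have h1 : (Fin.castLE hrm j : ℕ) = (p.1 : ℕ) := congrArg Fin.val h'.1
      simpa using h1
    · intro h'; exact absurd (Finset.mem_univ _) h'
  · next h =>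
    apply Finset.sum_eq_zero
    intro j _
    rw [if_neg]
    intro h'
    rw [Prod.ext_iff] at h'
    apply h
    have h1 : (Fin.castLE hrm j : ℕ) = (p.1 : ℕ) := congrArg Fin.val h'.1
    rw [← h1]
    exact j.2

lemma chiD_apply_row (m n : ℕ) {r : ℕ} (hrm : r ≤ m) (c : Fin r → Fin n) (j : Fin r) (v : Fin n) :
    chiD m n hrm c (Fin.castLE hrm j, v) = if c j = v then 1 else 0 := by
  rw [chiD_apply]
  rw [dif_pos (show ((Fin.castLE hrm j : Fin m) : ℕ) < r from j.2)]
  congr 1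

lemma prod_monomial_one {K : Type*} [CommSemiring K] {σ' : Type*} {ι : Type*} (s : Finset ι)
    (f : ι → (σ' →₀ ℕ)) :
    (∏ j ∈ s, (monomial (f j) (1 : K))) = monomial (∑ j ∈ s, f j) 1 := by
  classical
  induction s using Finset.cons_induction with
  | empty => simp
  | cons a s ha ih => rw [Finset.prod_cons, Finset.sum_cons, ih, monomial_mul, one_mul]


lemma diagP_eq_monomial (K : Type*) [Field K] (m n : ℕ) {r : ℕ} (hrm : r ≤ m)
    (c : Fin r → Fin n) :
    diagP K m n c = monomial (chiD m n hrm c) 1 := by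
  rw [diagP, chiD, ← prod_monomial_one]
  apply Finset.prod_congr rfl
  intro j _
  rw [dif_pos (lt_of_lt_of_le j.2 hrm)]
  rfl

lemma mem_JIdeal_pow_iff (K : Type*) [Field K] (m n : ℕ) {r a k : ℕ} (hrm : r ≤ m)
    (d : (Fin m × Fin n) →₀ ℕ) :
    monomial d (1:K) ∈ JIdeal K m n r a ^ k ↔
      ∃ D : Fin k → Fin r → Fin n, (∀ i, NEcols n r a (D i)) ∧ ∑ i, chiD m n hrm (D i) ≤ d := by
  classical
  have hset : {f | ∃ c : Fin r → Fin n, NEcols n r a c ∧ f = diagP K m n c}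
      = (fun s => monomial s (1:K)) '' {s | ∃ c : Fin r → Fin n, NEcols n r a c ∧ s = chiD m n hrm c} := by
    ext f
    constructor
    · rintro ⟨c, hc, rfl⟩
      exact ⟨chiD m n hrm c, ⟨c, hc, rfl⟩, (diagP_eq_monomial K m n hrm c).symm⟩
    · rintro ⟨s, ⟨c, hc, rfl⟩, rfl⟩
      exact ⟨c, hc, (diagP_eq_monomial K m n hrm c).symm⟩
  have hpow : ((fun s => monomial s (1:K)) ''
        {s | ∃ c : Fin r → Fin n, NEcols n r a c ∧ s = chiD m n hrm c}) ^ k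
      = (fun s => monomial s (1:K)) ''
        {s | ∃ D : Fin k → Fin r → Fin n, (∀ i, NEcols n r a (D i)) ∧ s = ∑ i, chiD m n hrm (D i)} := by
    ext f
    rw [Set.mem_pow]
    constructor
    · rintro ⟨F, hF⟩
      have hmem : ∀ i, ∃ c : Fin r → Fin n, NEcols n r a c ∧ (F i : MvPolynomial (Fin m × Fin n) K) = monomial (chiD m n hrm c) 1 := by
        intro i
        obtain ⟨s, ⟨c, hc, rfl⟩, hs⟩ := (F i).2
        exact ⟨c, hc, hs.symm⟩
      choose D hD hDeq using hmem
      refine ⟨∑ i, chiD m n hrm (D i), ⟨D, hD, rfl⟩, ?_⟩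
      rw [← hF, List.prod_ofFn]
      have hpr : (∏ i, (F i : MvPolynomial (Fin m × Fin n) K))
          = ∏ i, monomial (chiD m n hrm (D i)) 1 :=
        Finset.prod_congr rfl (fun i _ => hDeq i)
      rw [hpr, prod_monomial_one]
    · rintro ⟨s, ⟨D, hD, rfl⟩, rfl⟩
      refine ⟨fun i => ⟨monomial (chiD m n hrm (D i)) 1, ⟨chiD m n hrm (D i), ⟨D i, hD i, rfl⟩, rfl⟩⟩, ?_⟩
      rw [List.prod_ofFn]
      exact prod_monomial_one Finset.univ _
  have hIs : ∀ (S : Set (MvPolynomial (Fin m × Fin n) K)),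
      Ideal.span S ^ k = Ideal.span (S ^ k) := fun S => Submodule.span_pow S k
  rw [JIdeal, hset, hIs, hpow, mem_ideal_span_monomial_image]
  simp only [support_monomial, if_neg (one_ne_zero (α := K)), Finset.mem_singleton, forall_eq,
    Set.mem_setOf_eq]
  constructor
  · rintro ⟨s, ⟨D, hD, rfl⟩, hle⟩
    exact ⟨D, hD, hle⟩
  · rintro ⟨D, hD, hle⟩
    exact ⟨∑ i, chiD m n hrm (D i), ⟨D, hD, rfl⟩, hle⟩

lemma lower_comparable {k : ℕ} (A B : Finset (Fin k))
    (hA : ∀ ⦃x y : Fin k⦄, x ∈ A → y ≤ x → y ∈ A)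
    (hB : ∀ ⦃x y : Fin k⦄, x ∈ B → y ≤ x → y ∈ B) : A ⊆ B ∨ B ⊆ A := by
  by_contra h
  push_neg at h
  rw [Finset.not_subset, Finset.not_subset] at h
  obtain ⟨⟨x, hxA, hxB⟩, ⟨y, hyB, hyA⟩⟩ := h
  rcases le_total x y with hxy | hyx
  · exact hxB (hB hyB hxy)
  · exact hyA (hA hxA hyx)

lemma card_union_lower {k : ℕ} (A B : Finset (Fin k)) (h : A ⊆ B ∨ B ⊆ A) :
    (A ∪ B).card = max A.card B.card := by
  rcases h with h | h
  · rw [Finset.union_eq_right.mpr h, max_eq_right (Finset.card_le_card h)]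
  · rw [Finset.union_eq_left.mpr h, max_eq_left (Finset.card_le_card h)]

lemma card_filter_perm {k : ℕ} (σ : Equiv.Perm (Fin k)) (p : Fin k → Prop) [DecidablePred p] :
    (Finset.univ.filter fun l => p (σ l)).card = (Finset.univ.filter p).card := by
  apply Finset.card_bij (fun l _ => σ l)
  · intro a ha
    simp only [Finset.mem_filter, Finset.mem_univ, true_and] at ha ⊢
    exact ha
  · intro a _ b _ hab
    exact σ.injective hab
  · intro b hb
    simp only [Finset.mem_filter, Finset.mem_univ, true_and] at hb ⊢
    exact ⟨σ.symm b, by simpa using hb, by simp⟩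

lemma sorted_lt_sorted {k : ℕ} {α : Type*} [LinearOrder α] {a b : Fin k → α}
    (hab : ∀ i, a i < b i) (l : Fin k) :
    (a ∘ Tuple.sort a) l < (b ∘ Tuple.sort b) l := by
  by_contra hle
  push_neg at hle
  have hmono := Tuple.monotone_sort a
  have h1 : (Finset.Iic l).image (Tuple.sort b) ⊆
      Finset.univ.filter (fun i => a i < (a ∘ Tuple.sort a) l) := by
    intro i hi
    simp only [Finset.mem_image, Finset.mem_Iic] at hi
    obtain ⟨l', hl', rfl⟩ := hi
    refine Finset.mem_filter.mpr ⟨Finset.mem_univ _, ?_⟩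
    calc a (Tuple.sort b l') < b (Tuple.sort b l') := hab _
      _ ≤ (b ∘ Tuple.sort b) l := Tuple.monotone_sort b hl'
      _ ≤ (a ∘ Tuple.sort a) l := hle
  have h2 : (Finset.univ.filter (fun i => a i < (a ∘ Tuple.sort a) l)).card ≤ (l : ℕ) := by
    have heq : Finset.univ.filter (fun i => a i < (a ∘ Tuple.sort a) l)
        = (Finset.univ.filter (fun l'' => a (Tuple.sort a l'') < (a ∘ Tuple.sort a) l)).image
            (Tuple.sort a) := by
      ext i
      simp only [Finset.mem_filter, Finset.mem_univ, true_and, Finset.mem_image]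
      constructor
      · intro hai
        exact ⟨(Tuple.sort a).symm i, by simpa using hai, by simp⟩
      · rintro ⟨j, hj, rfl⟩
        exact hj
    rw [heq, Finset.card_image_of_injective _ (Tuple.sort a).injective]
    have hsub : Finset.univ.filter (fun l'' => a (Tuple.sort a l'') < (a ∘ Tuple.sort a) l)
        ⊆ Finset.Iio l := by
      intro l'' hl''
      simp only [Finset.mem_filter, Finset.mem_univ, true_and] at hl''
      simp only [Finset.mem_Iio]
      by_contra hge
      push_neg at hge
      exact absurd (hmono hge) (not_le.mpr hl'')
    calc _ ≤ (Finset.Iio l).card := Finset.card_le_card hsub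
      _ = (l : ℕ) := Fin.card_Iio l
  have h3 : (l : ℕ) + 1 ≤ (Finset.univ.filter (fun i => a i < (a ∘ Tuple.sort a) l)).card := by
    calc (l : ℕ) + 1 = (Finset.Iic l).card := (Fin.card_Iic l).symm
      _ = ((Finset.Iic l).image (Tuple.sort b)).card :=
          (Finset.card_image_of_injective _ (Tuple.sort b).injective).symm
      _ ≤ _ := Finset.card_le_card h1
  omega

lemma rowcount {k nn : ℕ} (s : Fin k → Fin nn) (e : Fin (k + 1) → Fin nn)
    (hs : Monotone s) (he : Monotone e) (f : Fin nn)
    (hsf : ∀ l, s l ≤ f) (hef : ∀ l, e l ≤ f)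
    (dd : Fin nn → ℕ)
    (hds : ∀ v, (Finset.univ.filter fun l => s l = v).card ≤ dd v)
    (hde : ∀ v, (Finset.univ.filter fun l => e l = v).card ≤ dd v)
    (hdf : 1 ≤ dd f) (v : Fin nn) :
    (Finset.univ.filter fun l => min (s l) (e l.castSucc) = v).card
      + (if v = f then 1 else 0) ≤ dd v := by
  classical
  set e' : Fin k → Fin nn := fun l => e l.castSucc with he'def
  have he' : Monotone e' := fun x y hxy => he (by simpa using hxy)
  set V : Fin k → Fin nn := fun l => min (s l) (e' l) with hVdef
  -- partition fact
  have key : ∀ (g : Fin k → Fin nn) (w : Fin nn),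
      (Finset.univ.filter fun l => g l ≤ w).card
        = (Finset.univ.filter fun l => g l = w).card
          + (Finset.univ.filter fun l => g l < w).card := by
    intro g w
    rw [← Finset.card_union_of_disjoint]
    · congr 1
      ext l
      simp only [Finset.mem_union, Finset.mem_filter, Finset.mem_univ, true_and]
      constructor
      · intro h; rcases lt_or_eq_of_le h with h | h
        · exact Or.inr h
        · exact Or.inl h
      · rintro (h | h)
        · exact le_of_eq h
        · exact le_of_lt h
    · rw [Finset.disjoint_filter]
      intro x _ hx
      simp [hx]
  have lower_le : ∀ (g : Fin k → Fin nn), Monotone g → ∀ (w : Fin nn)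
      ⦃x y : Fin k⦄, x ∈ (Finset.univ.filter fun l => g l ≤ w) → y ≤ x →
        y ∈ (Finset.univ.filter fun l => g l ≤ w) := by
    intro g hg w x y hx hyx
    simp only [Finset.mem_filter, Finset.mem_univ, true_and] at hx ⊢
    exact le_trans (hg hyx) hx
  have lower_lt : ∀ (g : Fin k → Fin nn), Monotone g → ∀ (w : Fin nn)
      ⦃x y : Fin k⦄, x ∈ (Finset.univ.filter fun l => g l < w) → y ≤ x →
        y ∈ (Finset.univ.filter fun l => g l < w) := by
    intro g hg w x y hx hyx
    simp only [Finset.mem_filter, Finset.mem_univ, true_and] at hx ⊢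
    exact lt_of_le_of_lt (hg hyx) hx
  have hunion_le : ∀ w : Fin nn, (Finset.univ.filter fun l => V l ≤ w)
      = (Finset.univ.filter fun l => s l ≤ w) ∪ (Finset.univ.filter fun l => e' l ≤ w) := by
    intro w
    ext l
    simp only [Finset.mem_union, Finset.mem_filter, Finset.mem_univ, true_and, hVdef, min_le_iff]
  have hunion_lt : ∀ w : Fin nn, (Finset.univ.filter fun l => V l < w)
      = (Finset.univ.filter fun l => s l < w) ∪ (Finset.univ.filter fun l => e' l < w) := by
    intro w
    ext l
    simp only [Finset.mem_union, Finset.mem_filter, Finset.mem_univ, true_and, hVdef, min_lt_iff]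
  have hVle : ∀ w, (Finset.univ.filter fun l => V l ≤ w).card
      = max (Finset.univ.filter fun l => s l ≤ w).card
          (Finset.univ.filter fun l => e' l ≤ w).card := by
    intro w
    rw [hunion_le w]
    exact card_union_lower _ _ (lower_comparable _ _ (lower_le s hs w) (lower_le e' he' w))
  have hVlt : ∀ w, (Finset.univ.filter fun l => V l < w).card
      = max (Finset.univ.filter fun l => s l < w).card
          (Finset.univ.filter fun l => e' l < w).card := by
    intro w
    rw [hunion_lt w]
    exact card_union_lower _ _ (lower_comparable _ _ (lower_lt s hs w) (lower_lt e' he' w))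
  -- abbreviations
  have hVcount : (Finset.univ.filter fun l => min (s l) (e l.castSucc) = v)
      = (Finset.univ.filter fun l => V l = v) := rfl
  rw [hVcount]
  have he'card : ∀ w, (Finset.univ.filter fun l => e' l = w).card
      ≤ (Finset.univ.filter fun l => e l = w).card := by
    intro w
    apply Finset.card_le_card_of_injOn (fun l => Fin.castSucc l)
    · intro l hl
      simp only [Finset.mem_coe, Finset.mem_filter, Finset.mem_univ, true_and] at hl ⊢
      exact hl
    · intro x _ y _ hxy
      exact Fin.castSucc_injective _ hxy
  have keyV := key V v
  have keyS := key s v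
  have keyE := key e' v
  have hVlev := hVle v
  have hVltv := hVlt v
  by_cases hvf : v = f
  · subst hvf
    rw [if_pos rfl]
    -- all values are ≤ v
    have hSfull : (Finset.univ.filter fun l => s l ≤ v) = Finset.univ := by
      apply Finset.filter_true_of_mem; intro l _; exact hsf l
    have hEfull : (Finset.univ.filter fun l => e' l ≤ v) = Finset.univ := by
      apply Finset.filter_true_of_mem; intro l _; exact hef _
    rw [hSfull, hEfull] at hVlev
    -- card (V = v) ≤ card (e' = v)
    have h1 : (Finset.univ.filter fun l => V l = v).card
        ≤ (Finset.univ.filter fun l => e' l = v).card := by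
      rw [hSfull] at keyS; rw [hEfull] at keyE
      have := le_max_right (Finset.univ.filter fun l => s l < v).card
        (Finset.univ.filter fun l => e' l < v).card
      omega
    -- card (e' = v) + 1 ≤ dd v
    have h2 : (Finset.univ.filter fun l => e' l = v).card + 1 ≤ dd v := by
      by_cases hlast : e (Fin.last k) = v
      · have hsplit : (Finset.univ.filter fun l : Fin (k+1) => e l = v).card
            = (Finset.univ.filter fun l : Fin k => e' l = v).card + 1 := by
          rw [Finset.card_filter, Finset.card_filter, Fin.sum_univ_castSucc, if_pos hlast]
        have := hde v
        omega
      · have h0 : (Finset.univ.filter fun l : Fin k => e' l = v).card = 0 := by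
          rw [Finset.card_eq_zero, Finset.filter_eq_empty_iff]
          intro l _
          intro hcontra
          apply hlast
          have hle1 : e' l ≤ e (Fin.last k) := he (Fin.le_last _)
          have hle2 : e (Fin.last k) ≤ v := hef _
          rw [hcontra] at hle1
          exact le_antisymm hle2 hle1
        omega
    omega
  · rw [if_neg hvf]
    have hbound : (Finset.univ.filter fun l => V l = v).card
        ≤ max (Finset.univ.filter fun l => s l = v).card
            (Finset.univ.filter fun l => e' l = v).card := by
      rcases le_total (Finset.univ.filter fun l => s l ≤ v).card
          (Finset.univ.filter fun l => e' l ≤ v).card with h | h <;>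
        rcases le_total (Finset.univ.filter fun l => s l < v).card
          (Finset.univ.filter fun l => e' l < v).card with h' | h' <;>
      · rw [max_comm] at hVlev hVltv <;> skip
        omega
    have := hds v
    have := hde v
    have := he'card v
    rcases max_cases (Finset.univ.filter fun l => s l = v).card
      (Finset.univ.filter fun l => e' l = v).card with ⟨hm, _⟩ | ⟨hm, _⟩ <;> omega

lemma exists_newfamily {k u' t n b : ℕ} (ht : 1 ≤ t) (htu : t < u' + 1)
    (D : Fin k → Fin (u' + 1) → Fin n) (E : Fin (k + 1) → Fin t → Fin n)
    (hDmono : ∀ i, StrictMono (D i)) (hEmono : ∀ i, StrictMono (E i))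
    (hDb : ∀ i j, b ≤ (D i j : ℕ) + 1) (hEb : ∀ i j, b ≤ (E i j : ℕ) + 1)
    (c : Fin t → Fin n)
    (dd : Fin (u' + 1) → Fin n → ℕ)
    (hDd : ∀ j v, (Finset.univ.filter fun i => D i j = v).card ≤ dd j v)
    (hEd : ∀ (j : Fin t) v, (Finset.univ.filter fun i => E i j = v).card
      ≤ dd (Fin.castLE htu.le j) v)
    (hcd : ∀ j : Fin t, 1 ≤ dd (Fin.castLE htu.le j) (c j))
    (hDtop : ∀ i (j : Fin t), D i (Fin.castLE htu.le j) ≤ c j)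
    (hEtop : ∀ i j, E i j ≤ c j) :
    ∃ D' : Fin k → Fin (u' + 1) → Fin n,
      (∀ l, StrictMono (D' l)) ∧ (∀ l j, b ≤ (D' l j : ℕ) + 1) ∧
      (∀ (j : Fin (u' + 1)) v, (Finset.univ.filter fun l => D' l j = v).card
          + (if h : (j : ℕ) < t then (if c ⟨(j : ℕ), h⟩ = v then 1 else 0) else 0) ≤ dd j v) := by
  classical
  set s : Fin (u' + 1) → Fin k → Fin n :=
    fun j => (fun i => D i j) ∘ Tuple.sort (fun i => D i j) with hsdef
  set es : Fin t → Fin (k + 1) → Fin n :=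
    fun j => (fun i => E i j) ∘ Tuple.sort (fun i => E i j) with hesdef
  have hsmono : ∀ j, Monotone (s j) := fun j => Tuple.monotone_sort _
  have hesmono : ∀ j, Monotone (es j) := fun j => Tuple.monotone_sort _
  have hsval : ∀ j l, ∃ i, s j l = D i j := fun j l => ⟨_, rfl⟩
  have hesval : ∀ j l, ∃ i, es j l = E i j := fun j l => ⟨_, rfl⟩
  have hscard : ∀ j v, (Finset.univ.filter fun l => s j l = v).card
      = (Finset.univ.filter fun i => D i j = v).card := fun j v =>
    card_filter_perm (Tuple.sort (fun i => D i j)) (fun i => D i j = v)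
  have hescard : ∀ j v, (Finset.univ.filter fun l => es j l = v).card
      = (Finset.univ.filter fun i => E i j = v).card := fun j v =>
    card_filter_perm (Tuple.sort (fun i => E i j)) (fun i => E i j = v)
  have hsint : ∀ (j1 j2 : Fin (u' + 1)), (j1 : ℕ) + 1 = (j2 : ℕ) → ∀ l, s j1 l < s j2 l := by
    intro j1 j2 hj l
    exact sorted_lt_sorted (fun i => (hDmono i) (show j1 < j2 by rw [Fin.lt_def]; omega)) l
  have hesint : ∀ (j1 j2 : Fin t), (j1 : ℕ) + 1 = (j2 : ℕ) → ∀ l, es j1 l < es j2 l := by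
    intro j1 j2 hj l
    exact sorted_lt_sorted (fun i => (hEmono i) (show j1 < j2 by rw [Fin.lt_def]; omega)) l
  set w : Fin (u' + 1) → Fin k → Fin n := fun j l =>
    if h : (j : ℕ) < t then min (s j l) (es ⟨(j : ℕ), h⟩ l.castSucc) else s j l with hwdef
  have hwsucc : ∀ (j1 j2 : Fin (u' + 1)), (j1 : ℕ) + 1 = (j2 : ℕ) → ∀ l, w j1 l < w j2 l := by
    intro j1 j2 hj l
    by_cases h1 : (j1 : ℕ) < t
    · by_cases h2 : (j2 : ℕ) < t
      · simp only [hwdef]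
        rw [dif_pos h1, dif_pos h2]
        apply lt_min
        · exact lt_of_le_of_lt (min_le_left _ _) (hsint j1 j2 hj l)
        · exact lt_of_le_of_lt (min_le_right _ _) (hesint ⟨j1, h1⟩ ⟨j2, h2⟩ hj l.castSucc)
      · simp only [hwdef]
        rw [dif_pos h1, dif_neg h2]
        exact lt_of_le_of_lt (min_le_left _ _) (hsint j1 j2 hj l)
    · have h2 : ¬(j2 : ℕ) < t := by omega
      simp only [hwdef]
      rw [dif_neg h1, dif_neg h2]
      exact hsint j1 j2 hj l
  refine ⟨fun l j => w j l, ?_, ?_, ?_⟩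
  · intro l
    rw [Fin.strictMono_iff_lt_succ]
    intro j
    exact hwsucc j.castSucc j.succ (by simp) l
  · intro l j
    show b ≤ (w j l : ℕ) + 1
    have h0t : ((0 : Fin (u' + 1)) : ℕ) < t := by
      simpa using Nat.lt_of_lt_of_le Nat.zero_lt_one ht
    have hw0 : b ≤ (w 0 l : ℕ) + 1 := by
      simp only [hwdef]
      rw [dif_pos h0t]
      rcases min_choice (s 0 l) (es ⟨(0 : Fin (u' + 1)), h0t⟩ l.castSucc) with hmx | hmx <;>
        rw [hmx]
      · obtain ⟨i, hi⟩ := hsval 0 l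
        rw [hi]; exact hDb i 0
      · obtain ⟨i, hi⟩ := hesval ⟨(0 : Fin (u' + 1)), h0t⟩ l.castSucc
        rw [hi]; exact hEb i _
    have hmono : StrictMono (fun j => w j l) := by
      rw [Fin.strictMono_iff_lt_succ]
      intro j
      exact hwsucc j.castSucc j.succ (by simp) l
    have h01 : w 0 l ≤ w j l := hmono.monotone (Fin.zero_le j)
    have hval : (w 0 l : ℕ) ≤ (w j l : ℕ) := h01
    omega
  · intro j v
    by_cases hjt : (j : ℕ) < t
    · rw [dif_pos hjt]
      set jt : Fin t := ⟨(j : ℕ), hjt⟩ with hjtdef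
      have hcast : Fin.castLE htu.le jt = j := Fin.ext rfl
      have hsf : ∀ l, s j l ≤ c jt := by
        intro l
        obtain ⟨i, hi⟩ := hsval j l
        rw [hi, ← hcast]
        exact hDtop i jt
      have hef : ∀ l, es jt l ≤ c jt := by
        intro l
        obtain ⟨i, hi⟩ := hesval jt l
        rw [hi]
        exact hEtop i jt
      have hds : ∀ v', (Finset.univ.filter fun l => s j l = v').card ≤ dd j v' := by
        intro v'; rw [hscard]; exact hDd j v'
      have hde : ∀ v', (Finset.univ.filter fun l => es jt l = v').card ≤ dd j v' := by
        intro v'; rw [hescard, ← hcast]; exact hEd jt v'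
      have hdf : 1 ≤ dd j (c jt) := by rw [← hcast]; exact hcd jt
      have hkey := rowcount (s j) (es jt) (hsmono j) (hesmono jt) (c jt) hsf hef (dd j)
        hds hde hdf v
      have hwj : ∀ l, w j l = min (s j l) (es jt l.castSucc) := by
        intro l
        simp only [hwdef]
        rw [dif_pos hjt]
      have hfilter : (Finset.univ.filter fun l => w j l = v)
          = (Finset.univ.filter fun l => min (s j l) (es jt l.castSucc) = v) := by
        apply Finset.filter_congr
        intro l _
        rw [hwj l]
      rw [hfilter]
      by_cases hcv : c jt = v
      · rw [if_pos hcv, if_pos hcv.symm] at *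
        omega
      · rw [if_neg hcv, if_neg (fun h => hcv h.symm)] at *
        omega
    · rw [dif_neg hjt]
      have hwj : ∀ l, w j l = s j l := by
        intro l
        simp only [hwdef]
        rw [dif_neg hjt]
      have hfilter : (Finset.univ.filter fun l => w j l = v)
          = (Finset.univ.filter fun l => s j l = v) := by
        apply Finset.filter_congr
        intro l _
        rw [hwj l]
      rw [hfilter, hscard]
      have := hDd j v
      omega

/-- Lemma `easy`. Let `b ≤ a`, `u > t`. If the monomial `M = X^d` lies in
`J_u(b)^k ∩ J_t(b)^{k+1} ∩ J_t(a)` and `F` is the lexicographically smallest diagonal of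
type `(t,a)` dividing `M`, then `M/F ∈ J_u(b)^k`. -/
theorem quotient_mem_pow_of_smallest_diag (K : Type*) [Field K] (m n : ℕ)
    (hm : 1 ≤ m) (hmn : m ≤ n) (k t a u b : ℕ)
    (ht : 1 ≤ t) (hb : 1 ≤ b) (hba : b ≤ a) (htu : t < u) (hum : u ≤ m)
    (hta : t + a ≤ n + 1) (hub : u + b ≤ n + 1)
    (d : (Fin m × Fin n) →₀ ℕ)
    (hM : monomial d (1 : K) ∈
      JIdeal K m n u b ^ k ⊓ JIdeal K m n t b ^ (k + 1) ⊓ JIdeal K m n t a)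
    (c : Fin t → Fin n)
    (hc : IsSmallestDiagDividing K m n t a (monomial d (1 : K)) c) :
    ∀ g : MvPolynomial (Fin m × Fin n) K,
      monomial d (1 : K) = diagP K m n c * g → g ∈ JIdeal K m n u b ^ k := by
  classical
  obtain ⟨u', rfl⟩ : ∃ u', u = u' + 1 := ⟨u - 1, by omega⟩
  intro g hg
  have htm : t ≤ m := le_trans htu.le hum
  rw [Submodule.mem_inf, Submodule.mem_inf] at hM
  obtain ⟨⟨hMu, hMt⟩, _⟩ := hM
  obtain ⟨hcNE, hcdvd, hcmax⟩ := hc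
  have hdiagc : diagP K m n c = monomial (chiD m n htm c) 1 := diagP_eq_monomial K m n htm c
  have hFd : chiD m n htm c ≤ d := by
    rw [hdiagc] at hcdvd
    rcases (monomial_dvd_monomial.mp hcdvd).1 with h | h
    · exact absurd h one_ne_zero
    · exact h
  have hgmon : g = monomial (d - chiD m n htm c) 1 := by
    have hne : (monomial (chiD m n htm c) (1 : K)) ≠ 0 := by
      rw [Ne, MvPolynomial.monomial_eq_zero]
      exact one_ne_zero
    apply mul_left_cancel₀ hne
    rw [← hdiagc, ← hg, hdiagc, monomial_mul, one_mul, add_tsub_cancel_of_le hFd]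
  obtain ⟨D, hDne, hDle⟩ := (mem_JIdeal_pow_iff K m n hum d).mp hMu
  obtain ⟨E, hEne, hEle⟩ := (mem_JIdeal_pow_iff K m n htm d).mp hMt
  -- cardinality bounds per row
  have hDcard : ∀ (j : Fin (u' + 1)) (v : Fin n),
      (Finset.univ.filter fun i => D i j = v).card ≤ d (Fin.castLE hum j, v) := by
    intro j v
    have h := Finsupp.le_def.mp hDle (Fin.castLE hum j, v)
    rw [Finsupp.finset_sum_apply] at h
    calc (Finset.univ.filter fun i => D i j = v).card
        = ∑ i : Fin k, if D i j = v then 1 else 0 := Finset.card_filter _ _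
      _ = ∑ i : Fin k, chiD m n hum (D i) (Fin.castLE hum j, v) := by
          exact Finset.sum_congr rfl fun i _ => (chiD_apply_row m n hum (D i) j v).symm
      _ ≤ d (Fin.castLE hum j, v) := h
  have hEcard : ∀ (j : Fin t) (v : Fin n),
      (Finset.univ.filter fun i => E i j = v).card ≤ d (Fin.castLE htm j, v) := by
    intro j v
    have h := Finsupp.le_def.mp hEle (Fin.castLE htm j, v)
    rw [Finsupp.finset_sum_apply] at h
    calc (Finset.univ.filter fun i => E i j = v).card
        = ∑ i : Fin (k + 1), if E i j = v then 1 else 0 := Finset.card_filter _ _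
      _ = ∑ i : Fin (k + 1), chiD m n htm (E i) (Fin.castLE htm j, v) := by
          exact Finset.sum_congr rfl fun i _ => (chiD_apply_row m n htm (E i) j v).symm
      _ ≤ d (Fin.castLE htm j, v) := h
  have hDcell : ∀ (i : Fin k) (j : Fin (u' + 1)), 1 ≤ d (Fin.castLE hum j, D i j) := by
    intro i j
    refine le_trans ?_ (hDcard j (D i j))
    exact Finset.card_pos.mpr ⟨i, Finset.mem_filter.mpr ⟨Finset.mem_univ _, rfl⟩⟩
  have hEcell : ∀ (i : Fin (k + 1)) (j : Fin t), 1 ≤ d (Fin.castLE htm j, E i j) := by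
    intro i j
    refine le_trans ?_ (hEcard j (E i j))
    exact Finset.card_pos.mpr ⟨i, Finset.mem_filter.mpr ⟨Finset.mem_univ _, rfl⟩⟩
  have hFcell : ∀ j : Fin t, 1 ≤ d (Fin.castLE htm j, c j) := by
    intro j
    have h := Finsupp.le_def.mp hFd (Fin.castLE htm j, c j)
    rwa [chiD_apply_row, if_pos rfl] at h
  -- the domination property of c
  have hstar : ∀ g' : Fin t → Fin n, StrictMono g' →
      (∀ j : Fin t, 1 ≤ d (Fin.castLE htm j, g' j)) → ∀ j, g' j ≤ c j := by
    intro g' hg'm hg'd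
    have hmono : StrictMono (fun j => max (g' j) (c j)) :=
      fun x y hxy => max_lt_max (hg'm hxy) (hcNE.1 hxy)
    have hNE : NEcols n t a (fun j => max (g' j) (c j)) := by
      refine ⟨hmono, fun j => ?_⟩
      show a ≤ ((max (g' j) (c j) : Fin n) : ℕ) + 1
      have h1 : c j ≤ max (g' j) (c j) := le_max_right _ _
      have h2 : (c j : ℕ) ≤ ((max (g' j) (c j) : Fin n) : ℕ) := h1
      have := hcNE.2 j
      omega
    have hdvd : diagP K m n (fun j => max (g' j) (c j)) ∣ monomial d (1 : K) := by
      rw [diagP_eq_monomial K m n htm, monomial_dvd_monomial]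
      refine ⟨Or.inr ?_, dvd_refl 1⟩
      intro p
      rw [chiD_apply]
      split
      · next hp =>
        split
        · next hcp =>
          set j : Fin t := ⟨(p.1 : ℕ), hp⟩ with hjdef
          have hj1 : (Fin.castLE htm j) = p.1 := Fin.ext rfl
          rcases max_choice (g' j) (c j) with hmx | hmx
          · have hpe : (Fin.castLE htm j, g' j) = p := by
              refine Prod.ext_iff.mpr ⟨hj1, ?_⟩
              rw [← hmx]
              exact hcp
            rw [← hpe]
            exact hg'd j
          · have hpe : (Fin.castLE htm j, c j) = p := by
              refine Prod.ext_iff.mpr ⟨hj1, ?_⟩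
              rw [← hmx]
              exact hcp
            rw [← hpe]
            exact hFcell j
        · exact Nat.zero_le _
      · exact Nat.zero_le _
    rcases hcmax _ hNE hdvd with heq | ⟨j, _, hjlt⟩
    · intro j
      have := congrFun heq j
      exact max_eq_right_iff.mp this
    · exact absurd hjlt (not_lt.mpr (le_max_right _ _))
  have hDtop : ∀ (i : Fin k) (j : Fin t), D i (Fin.castLE htu.le j) ≤ c j := by
    intro i
    apply hstar
    · intro x y hxy
      exact (hDne i).1 (show Fin.castLE htu.le x < Fin.castLE htu.le y by
        rw [Fin.lt_def]; exact hxy)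
    · intro j
      have h := hDcell i (Fin.castLE htu.le j)
      have hrow : (Fin.castLE hum (Fin.castLE htu.le j)) = Fin.castLE htm j := Fin.ext rfl
      rwa [hrow] at h
  have hEtop : ∀ (i : Fin (k + 1)) (j : Fin t), E i j ≤ c j := by
    intro i
    exact hstar (E i) (hEne i).1 (fun j => hEcell i j)
  -- apply the combinatorial construction
  obtain ⟨D', hD'mono, hD'b, hD'card⟩ := exists_newfamily ht htu D E
    (fun i => (hDne i).1) (fun i => (hEne i).1)
    (fun i j => (hDne i).2 j) (fun i j => (hEne i).2 j) c
    (fun j v => d (Fin.castLE hum j, v))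
    hDcard
    (fun j v => by
      show (Finset.univ.filter fun i => E i j = v).card
        ≤ d (Fin.castLE hum (Fin.castLE htu.le j), v)
      have hrow : (Fin.castLE hum (Fin.castLE htu.le j)) = Fin.castLE htm j := Fin.ext rfl
      rw [hrow]; exact hEcard j v)
    (fun j => by
      show 1 ≤ d (Fin.castLE hum (Fin.castLE htu.le j), c j)
      have hrow : (Fin.castLE hum (Fin.castLE htu.le j)) = Fin.castLE htm j := Fin.ext rfl
      rw [hrow]; exact hFcell j)
    hDtop hEtop
  rw [hgmon, mem_JIdeal_pow_iff K m n hum (d - chiD m n htm c)]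
  refine ⟨D', fun l => ⟨hD'mono l, hD'b l⟩, ?_⟩
  intro p
  rw [Finsupp.tsub_apply, Finsupp.finset_sum_apply]
  by_cases hpu : (p.1 : ℕ) < u' + 1
  · have hLHS : ∑ l : Fin k, chiD m n hum (D' l) p
        = (Finset.univ.filter fun l => D' l ⟨(p.1 : ℕ), hpu⟩ = p.2).card := by
      rw [Finset.card_filter]
      apply Finset.sum_congr rfl
      intro l _
      rw [chiD_apply, dif_pos hpu]
    rw [hLHS]
    have hkey := hD'card ⟨(p.1 : ℕ), hpu⟩ p.2
    have hrow : (Fin.castLE hum (⟨(p.1 : ℕ), hpu⟩ : Fin (u' + 1))) = p.1 := Fin.ext rfl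
    rw [hrow] at hkey
    have hchip : chiD m n htm c p
        = if h : (p.1 : ℕ) < t then (if c ⟨(p.1 : ℕ), h⟩ = p.2 then 1 else 0) else 0 :=
      chiD_apply m n htm c p
    have hkey2 : (Finset.univ.filter fun l => D' l ⟨(p.1 : ℕ), hpu⟩ = p.2).card
        + (if h : (p.1 : ℕ) < t then (if c ⟨(p.1 : ℕ), h⟩ = p.2 then 1 else 0) else 0)
          ≤ d p := hkey
    omega
  · have hLHS : ∑ l : Fin k, chiD m n hum (D' l) p = 0 := by
      apply Finset.sum_eq_zero
      intro l _
      rw [chiD_apply, dif_neg hpu]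
    rw [hLHS]
    exact Nat.zero_le _
end

section
/- Let A be a Noetherian integral domain and let P_1,…,P_r be nonzero prime ideals of A. Then each P_i is an associated prime of the A-module A/(P_1⋯P_r). -/
open Polynomial

/-- Determinant trick: in a domain, if `a * Q ⊆ P * Q` for a nonzero f.g. ideal `Q`
and a prime `P`, then `a ∈ P`. -/
lemma mem_prime_of_mul_le_mul {A : Type*} [CommRing A] [IsDomain A]
    (P Q : Ideal A) (hP : P.IsPrime) (hQ : Q ≠ ⊥) (hfg : Q.FG) (a : A)
    (h : ∀ q ∈ Q, a * q ∈ P * Q) : a ∈ P := by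
  haveI : Module.Finite A ↥Q := Module.Finite.iff_fg.mpr hfg
  set f : Module.End A ↥Q := algebraMap A (Module.End A ↥Q) a with hf
  have hmap : (P • (⊤ : Submodule A ↥Q)).map Q.subtype = P • Q := by
    rw [Submodule.map_smul'', Submodule.map_top, Submodule.range_subtype]
  have hrange : LinearMap.range f ≤ P • (⊤ : Submodule A ↥Q) := by
    rintro x ⟨q, rfl⟩
    have hx : (Q.subtype (f q)) ∈ (P • (⊤ : Submodule A ↥Q)).map Q.subtype := by
      rw [hmap]
      have : a * (q : A) ∈ P * Q := h q q.2
      simpa [hf, Module.algebraMap_end_apply, smul_eq_mul, Ideal.smul_eq_mul] using this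
    obtain ⟨y, hy, hxy⟩ := hx
    rwa [← Q.injective_subtype hxy]
  obtain ⟨p, hmonic, -, hcoeff, heval⟩ :=
    LinearMap.exists_monic_and_coeff_mem_pow_and_aeval_eq_zero_of_range_le_smul A f P hrange
  obtain ⟨q0, hq0Q, hq0⟩ := Submodule.exists_mem_ne_zero_of_ne_bot hQ
  have heval' : Polynomial.aeval f p = algebraMap A (Module.End A ↥Q) (p.eval a) := by
    rw [hf, Polynomial.aeval_algebraMap_apply, Polynomial.coe_aeval_eq_eval]
  have hz : p.eval a * q0 = 0 := by
    have := congrArg (fun g : Module.End A ↥Q => g ⟨q0, hq0Q⟩) (heval'.symm.trans heval)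
    simp only [Module.algebraMap_end_apply, LinearMap.zero_apply] at this
    exact congrArg Subtype.val this
  have hpz : p.eval a = 0 := by
    rcases mul_eq_zero.mp hz with h' | h'
    · exact h'
    · exact absurd h' hq0
  set n := p.natDegree with hn
  have hsum : p.eval a = (∑ k ∈ Finset.range n, p.coeff k * a ^ k) + a ^ n := by
    rw [Polynomial.eval_eq_sum_range, Finset.sum_range_succ, hmonic.coeff_natDegree, one_mul]
  have hmem : (∑ k ∈ Finset.range n, p.coeff k * a ^ k) ∈ P := by
    refine Ideal.sum_mem _ fun k hk => Ideal.mul_mem_right _ _ ?_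
    have h1 : p.coeff k ∈ P ^ (n - k) := hcoeff k
    have h2 : n - k ≠ 0 := Nat.sub_ne_zero_of_lt (Finset.mem_range.mp hk)
    exact Ideal.pow_le_self h2 h1
  have hpow : a ^ n ∈ P := by
    rw [hsum] at hpz
    rw [eq_neg_of_add_eq_zero_right hpz]
    exact P.neg_mem hmem
  exact hP.mem_of_pow_mem n hpow

/-- Let `A` be a Noetherian integral domain and `P 0, …, P (r-1)` nonzero
prime ideals of `A`. Then each `P i` is an associated prime of `A/(P 0 ⋯ P (r-1))`. -/
theorem isAssociatedPrime_of_prod_primes (A : Type*) [CommRing A] [IsDomain A]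
    [IsNoetherianRing A] (r : ℕ) (P : Fin r → Ideal A)
    (hprime : ∀ i, (P i).IsPrime) (hne : ∀ i, P i ≠ ⊥) (i : Fin r) :
    IsAssociatedPrime (P i) (A ⧸ (∏ j, P j)) := by
  classical
  set I : Ideal A := ∏ j, P j with hI
  set Q : Ideal A := ∏ j ∈ Finset.univ.erase i, P j with hQdef
  have hIQ : I = P i * Q := (Finset.mul_prod_erase _ _ (Finset.mem_univ i)).symm
  have hQne : Q ≠ ⊥ := by
    intro h
    have : Q ≤ ⊥ := h.le
    rw [hQdef] at this
    obtain ⟨j, -, hj⟩ := (Ideal.IsPrime.prod_le Ideal.bot_prime).mp this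
    exact hne j (le_bot_iff.mp hj)
  have hQfg : Q.FG := IsNoetherian.noetherian Q
  -- colon equality
  have hcolon : I.colon Q = P i := by
    apply le_antisymm
    · intro a ha
      rw [Submodule.mem_colon] at ha
      refine mem_prime_of_mul_le_mul (P i) Q (hprime i) hQne hQfg a fun q hq => ?_
      have := ha q hq
      rwa [smul_eq_mul, hIQ] at this
    · intro a ha
      rw [Submodule.mem_colon]
      intro q hq
      rw [smul_eq_mul, hIQ]
      exact Ideal.mul_mem_mul ha hq
  -- find a single element
  obtain ⟨s, hs⟩ := hQfg
  have hprod : (∏ x ∈ s, I.colon (Ideal.span {x})) ≤ P i := by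
    rw [← hcolon]
    intro b hb
    rw [Submodule.mem_colon']
    rw [← hs, Ideal.span, SetLike.coe_subset_coe, Submodule.span_le]
    intro x hx
    have hble : (∏ x ∈ s, I.colon (Ideal.span {x})) ≤ I.colon (Ideal.span {x}) := by
      calc (∏ y ∈ s, I.colon (Ideal.span {y})) ≤ s.inf (fun y => I.colon (Ideal.span {y})) :=
            Ideal.prod_le_inf
        _ ≤ I.colon (Ideal.span {x}) := Finset.inf_le hx
    have := Ideal.mem_colon_span_singleton.mp (hble hb)
    simpa [Submodule.mem_comap, smul_eq_mul, mul_comm] using this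
  obtain ⟨x, hxs, hxle⟩ := (Ideal.IsPrime.prod_le (hprime i)).mp hprod
  have hxeq : I.colon (Ideal.span {x}) = P i := by
    refine le_antisymm hxle ?_
    rw [← hcolon]
    refine Submodule.colon_mono le_rfl ?_
    rw [← hs]
    exact Ideal.span_mono (Set.singleton_subset_iff.mpr hxs)
  refine isAssociatedPrime_iff.mpr ⟨hprime i, Ideal.Quotient.mk I x, ?_⟩
  ext a
  rw [Submodule.mem_colon_singleton, Submodule.mem_bot, ← hxeq, Ideal.mem_colon_span_singleton]
  have : a • Ideal.Quotient.mk I x = Ideal.Quotient.mk I (a * x) := rfl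
  rw [this, Ideal.Quotient.eq_zero_iff_mem]
end
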